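/- arXiv:1710.01471 — 7 statements merged into one kernel-verified Lean document; each statement's English description precedes it below -/
import Mathlib

section
/- For every integer n ≥ 5, the maximum number of edges in a graph on n vertices containing no bowtie (two triangles sharing exactly one vertex) is ⌊n²/4⌋ + 1. -/
open Finset

/-- A bowtie in `G` with centre `c` and triangles `c a b`, `c d e`. -/
def IsBowtie {V : Type*} (G : SimpleGraph V) (c a b d e : V) : Prop :=
  G.Adj c a ∧ G.Adj c b ∧ G.Adj a b ∧ G.Adj c d ∧ G.Adj c e ∧ G.Adj d e ∧
  a ≠ d ∧ a ≠ e ∧ b ≠ d ∧ b ≠ e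

/-- The number of bowtie subgraphs of `G`: each bowtie subgraph corresponds to
exactly 8 ordered tuples `(c,a,b,d,e)`. -/
noncomputable def bowtieCount {V : Type*} (G : SimpleGraph V) : ℕ :=
  Nat.card {t : V × V × V × V × V //
    IsBowtie G t.1 t.2.1 t.2.2.1 t.2.2.2.1 t.2.2.2.2} / 8

/-- The edge set of the bowtie on `(c,a,b,d,e)`. -/
def btEdges {V : Type*} (c a b d e : V) : Set (Sym2 V) :=
  {s(c,a), s(c,b), s(a,b), s(c,d), s(c,e), s(d,e)}

/-- The number of bowtie subgraphs of `G` containing both edges `f₁` and `f₂`. -/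
noncomputable def bowtieCountThru2 {V : Type*} (G : SimpleGraph V) (f₁ f₂ : Sym2 V) : ℕ :=
  Nat.card {t : V × V × V × V × V //
    IsBowtie G t.1 t.2.1 t.2.2.1 t.2.2.2.1 t.2.2.2.2 ∧
    f₁ ∈ btEdges t.1 t.2.1 t.2.2.1 t.2.2.2.1 t.2.2.2.2 ∧
    f₂ ∈ btEdges t.1 t.2.1 t.2.2.1 t.2.2.2.1 t.2.2.2.2} / 8

/-- The number of bowtie subgraphs of `G` containing the edge `f`. -/
noncomputable def bowtieCountThru1 {V : Type*} (G : SimpleGraph V) (f : Sym2 V) : ℕ :=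
  Nat.card {t : V × V × V × V × V //
    IsBowtie G t.1 t.2.1 t.2.2.1 t.2.2.2.1 t.2.2.2.2 ∧
    f ∈ btEdges t.1 t.2.1 t.2.2.1 t.2.2.2.1 t.2.2.2.2} / 8

/-- The number of edges of `G`. -/
noncomputable def edgeCount {V : Type*} (G : SimpleGraph V) : ℕ := Nat.card G.edgeSet

/-- The degree of `v` in `G`. -/
noncomputable def nbrDeg {V : Type*} (G : SimpleGraph V) (v : V) : ℕ :=
  Nat.card {w // G.Adj v w}

/-- The number of neighbours of `v` lying in the same part of the
partition `{V₁, V₁ᶜ}` as `v` (the "bad degree"). -/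
noncomputable def sameDeg {V : Type*} (G : SimpleGraph V) (V₁ : Finset V) (v : V) : ℕ :=
  Nat.card {w // G.Adj v w ∧ (w ∈ V₁ ↔ v ∈ V₁)}

/-- The number of edges of `G` with both endpoints in `S`. -/
noncomputable def insideEdges {V : Type*} (G : SimpleGraph V) (S : Finset V) : ℕ :=
  Nat.card {e : Sym2 V // e ∈ G.edgeSet ∧ ∀ x ∈ e, x ∈ S}

/-- `hF n q`: the minimum number of bowtie subgraphs over graphs on `n`
vertices with `ex(n,F) + q = ⌊n²/4⌋ + 1 + q` edges. -/
noncomputable def hF (n q : ℕ) : ℕ :=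
  sInf {k | ∃ G : SimpleGraph (Fin n), edgeCount G = n ^ 2 / 4 + 1 + q ∧ bowtieCount G = k}


section Aux
open SimpleGraph


lemma edgeCount_eq {V : Type*} [Fintype V] (G : SimpleGraph V) [DecidableEq V]
    [DecidableRel G.Adj] : edgeCount G = G.edgeFinset.card := by
  rw [edgeCount, Nat.card_coe_set_eq, Set.ncard_eq_toFinset_card']
  exact congrArg Finset.card (by ext; simp)




lemma card_filter_val_lt (n a : ℕ) (h : a ≤ n) :
    ((univ : Finset (Fin n)).filter (fun j : Fin n => (j : ℕ) < a)).card = a := by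
  have : ((univ : Finset (Fin n)).filter (fun j : Fin n => (j : ℕ) < a)) =
      (univ : Finset (Fin a)).map (Fin.castLEEmb h) := by
    ext j
    simp only [mem_filter, mem_univ, true_and, mem_map, Fin.castLEEmb_apply]
    constructor
    · intro hj; exact ⟨⟨j, hj⟩, by simp [Fin.castLE]⟩
    · rintro ⟨i, rfl⟩; simpa using i.2
  rw [this, card_map, card_univ, Fintype.card_fin]

/-- `K_{⌊n/2⌋, ⌈n/2⌉}` plus the edge between `0` and `1`. -/
def Gext (n : ℕ) : SimpleGraph (Fin n) where
  Adj i j := ((i : ℕ) < n / 2 ∧ n / 2 ≤ (j : ℕ)) ∨ ((j : ℕ) < n / 2 ∧ n / 2 ≤ (i : ℕ)) ∨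
    ((i : ℕ) + (j : ℕ) = 1)
  symm := by constructor; intro i j h; rcases h with h | h | h <;> omega
  loopless := by constructor; intro i h; rcases h with h | h | h <;> omega

instance (n : ℕ) : DecidableRel (Gext n).Adj := fun i j => by
  dsimp [Gext]; infer_instance

lemma Gext_BF (n : ℕ) (hn : 5 ≤ n) (c a b d e : Fin n) : ¬ IsBowtie (Gext n) c a b d e := by
  have h2 : 2 ≤ n / 2 := by omega
  rintro ⟨h1, h2', h3, h4, h5, h6, h7, h8, h9, h10⟩
  have tri : ∀ x y z : Fin n, (Gext n).Adj x y → (Gext n).Adj x z → (Gext n).Adj y z →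
      ((x : ℕ) = 0 ∨ (y : ℕ) = 0 ∨ (z : ℕ) = 0) ∧
      ((x : ℕ) = 1 ∨ (y : ℕ) = 1 ∨ (z : ℕ) = 1) := by
    intro x y z hxy hxz hyz
    rcases hxy with h | h | h <;> rcases hxz with h' | h' | h' <;>
      rcases hyz with h'' | h'' | h'' <;> omega
  have t1 := tri c a b h1 h2' h3
  have t2 := tri c d e h4 h5 h6
  have veq : ∀ (x y : Fin n) (k : ℕ), (x : ℕ) = k → (y : ℕ) = k → x = y := by
    intro x y k hx hy; exact Fin.ext (hx.trans hy.symm)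
  have c0 : (c : ℕ) = 0 := by
    rcases t1.1 with h | h | h
    · exact h
    · rcases t2.1 with h' | h' | h'
      · exact h'
      · exact absurd (veq a d 0 h h') h7
      · exact absurd (veq a e 0 h h') h8
    · rcases t2.1 with h' | h' | h'
      · exact h'
      · exact absurd (veq b d 0 h h') h9
      · exact absurd (veq b e 0 h h') h10
  have c1 : (c : ℕ) = 1 := by
    rcases t1.2 with h | h | h
    · exact h
    · rcases t2.2 with h' | h' | h'
      · exact h'
      · exact absurd (veq a d 1 h h') h7
      · exact absurd (veq a e 1 h h') h8
    · rcases t2.2 with h' | h' | h'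
      · exact h'
      · exact absurd (veq b d 1 h h') h9
      · exact absurd (veq b e 1 h h') h10
  omega

lemma card_filter_val_ge (n a : ℕ) (h : a ≤ n) :
    ((univ : Finset (Fin n)).filter (fun j : Fin n => ¬ ((j : ℕ) < a))).card = n - a := by
  have hsplit := card_filter_add_card_filter_not (s := (univ : Finset (Fin n)))
    (p := fun j : Fin n => (j : ℕ) < a)
  have h1 := card_filter_val_lt n a h
  have h2 : (univ : Finset (Fin n)).card = n := by simp
  omega

lemma Gext_degree_top (n : ℕ) (hn : 5 ≤ n) (i : Fin n) (hi : n / 2 ≤ (i : ℕ)) :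
    (Gext n).degree i = n / 2 := by
  rw [← card_neighborFinset_eq_degree, neighborFinset_eq_filter]
  have : (univ : Finset (Fin n)).filter ((Gext n).Adj i) =
      (univ : Finset (Fin n)).filter (fun j : Fin n => (j : ℕ) < n / 2) := by
    apply filter_congr
    intro j _
    show (Gext n).Adj i j ↔ _
    constructor
    · rintro (h | h | h) <;> omega
    · intro h
      right; left
      exact ⟨h, hi⟩
  rw [this, card_filter_val_lt n _ (by omega)]

lemma Gext_degree_mid (n : ℕ) (hn : 5 ≤ n) (i : Fin n) (hi : (i : ℕ) < n / 2)
    (hi2 : 2 ≤ (i : ℕ)) : (Gext n).degree i = n - n / 2 := by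
  rw [← card_neighborFinset_eq_degree, neighborFinset_eq_filter]
  have : (univ : Finset (Fin n)).filter ((Gext n).Adj i) =
      (univ : Finset (Fin n)).filter (fun j : Fin n => ¬ ((j : ℕ) < n / 2)) := by
    apply filter_congr
    intro j _
    show (Gext n).Adj i j ↔ _
    constructor
    · rintro (h | h | h) <;> omega
    · intro h
      left
      exact ⟨hi, by omega⟩
  rw [this, card_filter_val_ge n _ (by omega)]

lemma Gext_degree_low (n : ℕ) (hn : 5 ≤ n) (i : Fin n) (hi : (i : ℕ) ≤ 1) :
    (Gext n).degree i = n - n / 2 + 1 := by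
  classical
  rw [← card_neighborFinset_eq_degree, neighborFinset_eq_filter]
  have h2 : 2 ≤ n / 2 := by omega
  set j₀ : Fin n := ⟨1 - (i : ℕ), by omega⟩ with hj₀
  have : (univ : Finset (Fin n)).filter ((Gext n).Adj i) =
      insert j₀ ((univ : Finset (Fin n)).filter (fun j : Fin n => ¬ ((j : ℕ) < n / 2))) := by
    ext j
    simp only [mem_filter, mem_univ, true_and, mem_insert]
    constructor
    · rintro (h | h | h)
      · right; omega
      · omega
      · left
        rw [hj₀]
        apply Fin.ext
        simp only []
        omega
    · rintro (rfl | h)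
      · right; right; simp [hj₀]; omega
      · left; exact ⟨by omega, by omega⟩
  rw [this, card_insert_of_notMem (by simp [hj₀]; omega), card_filter_val_ge n _ (by omega)]

lemma Gext_edge_card (n : ℕ) (hn : 5 ≤ n) :
    2 * (Gext n).edgeFinset.card =
      2 * (n - n / 2 + 1) + (n / 2 - 2) * (n - n / 2) + (n - n / 2) * (n / 2) := by
  classical
  have h2 : 2 ≤ n / 2 := by omega
  have hsum := (Gext n).sum_degrees_eq_twice_card_edges
  have hsplit1 := sum_filter_add_sum_filter_not univ (fun i : Fin n => (i : ℕ) < n / 2)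
    (fun i => (Gext n).degree i)
  have hsplit2 := sum_filter_add_sum_filter_not
    (univ.filter (fun i : Fin n => (i : ℕ) < n / 2)) (fun i : Fin n => (i : ℕ) < 2)
    (fun i => (Gext n).degree i)
  have hc2 : ((univ.filter (fun i : Fin n => (i : ℕ) < n / 2)).filter
      (fun i : Fin n => (i : ℕ) < 2)).card = 2 := by
    rw [filter_filter]
    have : (univ.filter fun a : Fin n => (a : ℕ) < n / 2 ∧ (a : ℕ) < 2) =
        univ.filter (fun a : Fin n => (a : ℕ) < 2) := by
      apply filter_congr
      intro i _
      constructor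
      · exact fun h => h.2
      · intro h; exact ⟨by omega, h⟩
    rw [this, card_filter_val_lt n 2 (by omega)]
  have hcp : (univ.filter (fun i : Fin n => (i : ℕ) < n / 2)).card = n / 2 :=
    card_filter_val_lt n _ (by omega)
  have hcmid := card_filter_add_card_filter_not
    (s := univ.filter (fun i : Fin n => (i : ℕ) < n / 2)) (p := fun i : Fin n => (i : ℕ) < 2)
  have hlow : ∑ i ∈ (univ.filter (fun i : Fin n => (i : ℕ) < n / 2)).filter
      (fun i : Fin n => (i : ℕ) < 2), (Gext n).degree i = 2 * (n - n / 2 + 1) := by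
    rw [Finset.sum_congr rfl (fun i hi => Gext_degree_low n hn i (by
        simp only [mem_filter] at hi; omega)),
      Finset.sum_const, hc2]
    ring
  have hmid : ∑ i ∈ (univ.filter (fun i : Fin n => (i : ℕ) < n / 2)).filter
      (fun i : Fin n => ¬ (i : ℕ) < 2), (Gext n).degree i = (n / 2 - 2) * (n - n / 2) := by
    rw [Finset.sum_congr rfl (fun i hi => Gext_degree_mid n hn i (by
        simp only [mem_filter] at hi; omega) (by
        simp only [mem_filter] at hi; omega)),
      Finset.sum_const, smul_eq_mul]
    have : ((univ.filter (fun i : Fin n => (i : ℕ) < n / 2)).filter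
        (fun i : Fin n => ¬ (i : ℕ) < 2)).card = n / 2 - 2 := by omega
    rw [this]
  have htop : ∑ i ∈ univ.filter (fun i : Fin n => ¬ (i : ℕ) < n / 2),
      (Gext n).degree i = (n - n / 2) * (n / 2) := by
    rw [Finset.sum_congr rfl (fun i hi => Gext_degree_top n hn i (by
        simp only [mem_filter] at hi; omega)),
      Finset.sum_const, smul_eq_mul, card_filter_val_ge n _ (by omega)]
  omega

lemma Gext_card (n : ℕ) (hn : 5 ≤ n) : (Gext n).edgeFinset.card = n ^ 2 / 4 + 1 := by
  have key := Gext_edge_card n hn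
  obtain ⟨k, rfl | rfl⟩ := Nat.even_or_odd' n
  · have hk : 3 ≤ k := by omega
    obtain ⟨m, rfl⟩ : ∃ m, k = m + 3 := ⟨k - 3, by omega⟩
    have h1 : 2 * (m + 3) / 2 = m + 3 := by omega
    rw [h1] at key
    have h2 : 2 * (m + 3) - (m + 3) = m + 3 := by omega
    rw [h2] at key
    have h3 : m + 3 - 2 = m + 1 := by omega
    rw [h3] at key
    have hg : (2 * (m + 3)) ^ 2 = ((m + 3) * (m + 3)) * 4 := by ring
    have hbc : (m + 3) * (m + 3) = (m + 1) * (m + 3) + 2 * (m + 3) := by ring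
    omega
  · have hk : 2 ≤ k := by omega
    obtain ⟨m, rfl⟩ : ∃ m, k = m + 2 := ⟨k - 2, by omega⟩
    have h1 : (2 * (m + 2) + 1) / 2 = m + 2 := by omega
    rw [h1] at key
    have h2 : 2 * (m + 2) + 1 - (m + 2) = m + 3 := by omega
    rw [h2] at key
    have h3 : m + 2 - 2 = m := by omega
    rw [h3] at key
    have hg : (2 * (m + 2) + 1) ^ 2 = ((m + 2) * (m + 3)) * 4 + 1 := by ring
    have hpq : (m + 3) * (m + 2) = m * (m + 3) + 2 * (m + 3) := by ring
    have hqr : (m + 2) * (m + 3) = (m + 3) * (m + 2) := by ring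
    omega

section MinDeg
variable {n : ℕ} (G : SimpleGraph (Fin n)) [DecidableRel G.Adj]




lemma common_nbr (hdeg : ∀ v, n / 2 + 1 ≤ G.degree v) (u v : Fin n) :
    ∃ t, G.Adj u t ∧ G.Adj v t := by
  have h1 : n / 2 + 1 ≤ (G.neighborFinset u).card := by
    rw [card_neighborFinset_eq_degree]; exact hdeg u
  have h2 : n / 2 + 1 ≤ (G.neighborFinset v).card := by
    rw [card_neighborFinset_eq_degree]; exact hdeg v
  have hu : ((G.neighborFinset u) ∪ (G.neighborFinset v)).card ≤ n := by
    have := card_le_univ ((G.neighborFinset u) ∪ (G.neighborFinset v))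
    simpa using this
  have key := card_union_add_card_inter (G.neighborFinset u) (G.neighborFinset v)
  obtain ⟨t, ht⟩ := card_pos.mp (show 0 < ((G.neighborFinset u) ∩ (G.neighborFinset v)).card by omega)
  rw [mem_inter, mem_neighborFinset, mem_neighborFinset] at ht
  exact ⟨t, ht.1, ht.2⟩

lemma hub (BF : ∀ c a b d e : Fin n, ¬ IsBowtie G c a b d e)
    (hdeg : ∀ v, n / 2 + 1 ≤ G.degree v)
    (u v x₁ x₂ x₃ : Fin n) (huv : G.Adj u v)
    (h1 : G.Adj u x₁ ∧ G.Adj v x₁) (h2 : G.Adj u x₂ ∧ G.Adj v x₂)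
    (h3 : G.Adj u x₃ ∧ G.Adj v x₃)
    (d12 : x₁ ≠ x₂) (d13 : x₁ ≠ x₃) (d23 : x₂ ≠ x₃)
    (x : Fin n) (hux : G.Adj u x) (hxv : x ≠ v) :
    G.Adj v x ∧ ∀ t, G.Adj u t → G.Adj x t → t = v := by
  have filt : ∀ y : Fin n, G.Adj u y → G.Adj v y → x ≠ y →
      ∀ t, G.Adj u t → G.Adj x t → t = v ∨ t = y := by
    intro y huy hvy hxy t hut hxt
    by_contra hcon
    push_neg at hcon
    exact BF u v y x t ⟨huv, huy, hvy, hux, hut, hxt,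
      Ne.symm hxv, Ne.symm hcon.1, Ne.symm hxy, Ne.symm hcon.2⟩
  have key : ∀ t, G.Adj u t → G.Adj x t → t = v := by
    have pick : ∃ y z : Fin n, y ≠ z ∧ (G.Adj u y ∧ G.Adj v y) ∧ (G.Adj u z ∧ G.Adj v z)
        ∧ x ≠ y ∧ x ≠ z := by
      by_cases e1 : x = x₁
      · exact ⟨x₂, x₃, d23, h2, h3, by rw [e1]; exact d12, by rw [e1]; exact d13⟩
      · by_cases e2 : x = x₂
        · exact ⟨x₁, x₃, d13, h1, h3, by rw [e2]; exact Ne.symm d12, by rw [e2]; exact d23⟩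
        · exact ⟨x₁, x₂, d12, h1, h2, e1, e2⟩
    obtain ⟨y, z, hyz, hy, hz, hxy, hxz⟩ := pick
    intro t hut hxt
    rcases filt y hy.1 hy.2 hxy t hut hxt with h | h
    · exact h
    · rcases filt z hz.1 hz.2 hxz t hut hxt with h' | h'
      · exact h'
      · exact absurd (h.symm.trans h') hyz
  obtain ⟨t, hut, hxt⟩ := common_nbr G hdeg u x
  have := key t hut hxt
  exact ⟨(this ▸ hxt).symm, key⟩

lemma nbr_diff (u : Fin n) (s : Finset (Fin n)) :
    (G.degree u : ℤ) - s.card ≤ ((G.neighborFinset u) \ s).card := by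
  have h1 := le_card_sdiff s (G.neighborFinset u)
  have h2 := card_le_card (inter_subset_right (s₁ := G.neighborFinset u) (s₂ := s))
  have := card_sdiff_add_card_inter (G.neighborFinset u) s
  rw [card_neighborFinset_eq_degree] at this
  omega

lemma core (BF : ∀ c a b d e : Fin n, ¬ IsBowtie G c a b d e)
    (hdeg : ∀ v, n / 2 + 1 ≤ G.degree v) (hn : 6 ≤ n)
    (u v w a₁ : Fin n) (huv : G.Adj u v) (huw : G.Adj u w) (hvw : G.Adj v w)
    (hua : G.Adj u a₁) (hav : a₁ ≠ v) (haw : a₁ ≠ w) (hadj : G.Adj v a₁) : False := by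
  classical
  -- pick b in N(u) \ {v,w,a₁}
  have hdu : 4 ≤ G.degree u := le_trans (by omega) (hdeg u)
  have hb : ∃ b, b ∈ (G.neighborFinset u) \ ({v, w, a₁} : Finset (Fin n)) := by
    apply card_pos.mp
    have h3 : (({v, w, a₁} : Finset (Fin n))).card ≤ 3 := by
      apply le_trans (card_insert_le _ _)
      apply Nat.succ_le_succ
      apply le_trans (card_insert_le _ _)
      simp
    have := nbr_diff G u ({v, w, a₁} : Finset (Fin n))
    omega
  obtain ⟨b, hbmem⟩ := hb
  rw [mem_sdiff, mem_neighborFinset] at hbmem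
  obtain ⟨hAub, hbns⟩ := hbmem
  have hbv : b ≠ v := fun h => hbns (by simp [h])
  have hbw : b ≠ w := fun h => hbns (by simp [h])
  have hba : b ≠ a₁ := fun h => hbns (by simp [h])
  -- b is adjacent to v
  have hvb : G.Adj v b := by
    obtain ⟨t, hut, hbt⟩ := common_nbr G hdeg u b
    have htv : t = v := by
      by_contra htv
      have htw : t = w := by
        by_contra htw
        exact BF u v w b t ⟨huv, huw, hvw, hAub, hut, hbt,
          Ne.symm hbv, Ne.symm htv, Ne.symm hbw, Ne.symm htw⟩
      have hta : t = a₁ := by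
        by_contra hta
        exact BF u v a₁ b t ⟨huv, hua, hadj, hAub, hut, hbt,
          Ne.symm hbv, Ne.symm htv, Ne.symm hba, Ne.symm hta⟩
      exact haw (hta.symm.trans htw)
    exact (htv ▸ hbt).symm
  -- hAub facts
  have H1 := fun x hx hxv => hub G BF hdeg u v w a₁ b huv ⟨huw, hvw⟩ ⟨hua, hadj⟩
    ⟨hAub, hvb⟩ (Ne.symm haw) hbw.symm hba.symm x hx hxv
  have H2 := fun y hy hyu => hub G BF hdeg v u w a₁ b huv.symm ⟨hvw, huw⟩ ⟨hadj, hua⟩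
    ⟨hvb, hAub⟩ (Ne.symm haw) hbw.symm hba.symm y hy hyu
  -- the closed neighbourhood C of u
  set C : Finset (Fin n) := insert u (G.neighborFinset u) with hC
  have hCcard : C.card = G.degree u + 1 := by
    rw [hC, card_insert_of_notMem (SimpleGraph.notMem_neighborFinset_self G u),
      card_neighborFinset_eq_degree]
  have huC : u ∈ C := mem_insert_self _ _
  have hmemC : ∀ t, G.Adj u t → t ∈ C := fun t ht => by
    rw [hC]; exact mem_insert_of_mem (by rw [mem_neighborFinset]; exact ht)
  have hvC : v ∈ C := by rw [hC]; exact mem_insert_of_mem (by rw [mem_neighborFinset]; exact huv)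
  -- N(w) ⊆ D
  set D : Finset (Fin n) := insert u (insert v (univ \ C)) with hD
  have hND : G.neighborFinset w ⊆ D := by
    intro t ht
    rw [mem_neighborFinset] at ht
    by_cases htC : t ∈ C
    · rw [hC, mem_insert, mem_neighborFinset] at htC
      rcases htC with h | h
      · rw [hD, h]; exact mem_insert_self _ _
      · by_cases htv : t = v
        · rw [hD, htv]; exact mem_insert_of_mem (mem_insert_self _ _)
        · have := (H1 w huw hvw.ne').2 t h ht
          exact absurd this htv
    · rw [hD]
      exact mem_insert_of_mem (mem_insert_of_mem (mem_sdiff.mpr ⟨mem_univ _, htC⟩))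
  have hDcard : D.card ≤ n + 1 - G.degree u := by
    have h1 : (univ \ C).card = n - C.card := by
      rw [card_sdiff_of_subset (subset_univ _), card_univ, Fintype.card_fin]
    have := card_insert_le v (univ \ C)
    have := card_insert_le u (insert v (univ \ C))
    have hc : C.card ≤ n := by
      have := card_le_univ C; simpa using this
    rw [hD]
    omega
  have hdw : G.degree w ≤ D.card := by
    rw [← card_neighborFinset_eq_degree]; exact card_le_card hND
  have hdegw := hdeg w
  have hdegu := hdeg u
  -- equality: N(w) = D
  have hNDeq : G.neighborFinset w = D := by
    apply eq_of_subset_of_card_le hND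
    rw [card_neighborFinset_eq_degree]
    omega
  -- z₁ outside C
  have hz1 : ∃ z, z ∈ univ \ C := by
    apply card_pos.mp
    have h1 : (univ \ C).card = n - C.card := by
      rw [card_sdiff_of_subset (subset_univ _), card_univ, Fintype.card_fin]
    omega
  obtain ⟨z₁, hz₁⟩ := hz1
  have hz₁C : z₁ ∉ C := (mem_sdiff.mp hz₁).2
  have hz₁u : z₁ ≠ u := fun h => hz₁C (h ▸ huC)
  have hz₁v : z₁ ≠ v := fun h => hz₁C (h ▸ hvC)
  -- z₂ : neighbour of z₁ outside C
  have hz2 : ∃ z₂, G.Adj z₁ z₂ ∧ z₂ ∉ C := by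
    have hsub : G.neighborFinset z₁ ∩ C ⊆ C \ {u, v} := by
      intro t ht
      rw [mem_inter, mem_neighborFinset] at ht
      refine mem_sdiff.mpr ⟨ht.2, ?_⟩
      intro hmem
      rcases mem_insert.mp hmem with rfl | hmem
      · exact hz₁C (hmemC z₁ ht.1.symm)
      · rw [mem_singleton] at hmem
        subst hmem
        exact hz₁C (hmemC z₁ (H2 z₁ ht.1.symm hz₁u).1)
    have hcardsub : (G.neighborFinset z₁ ∩ C).card ≤ C.card - 2 := by
      have h2 : ({u, v} : Finset (Fin n)).card = 2 := by
        rw [card_insert_of_notMem (by simp [huv.ne]), card_singleton]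
      have hsub2 : ({u, v} : Finset (Fin n)) ⊆ C := by
        intro t ht; rcases mem_insert.mp ht with rfl | ht
        · exact huC
        · rw [mem_singleton] at ht; exact ht ▸ hvC
      have := card_le_card hsub
      rw [card_sdiff_of_subset hsub2, h2] at this
      exact this
    have hdz := hdeg z₁
    have hpos : 0 < (G.neighborFinset z₁ \ C).card := by
      have := card_sdiff_add_card_inter (G.neighborFinset z₁) C
      rw [card_neighborFinset_eq_degree] at this
      omega
    obtain ⟨z₂, hz₂⟩ := card_pos.mp hpos
    rw [mem_sdiff, mem_neighborFinset] at hz₂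
    exact ⟨z₂, hz₂.1, hz₂.2⟩
  obtain ⟨z₂, hz₁z₂, hz₂C⟩ := hz2
  have hwz : ∀ z, z ∉ C → G.Adj w z := by
    intro z hz
    rw [← mem_neighborFinset, hNDeq, hD]
    exact mem_insert_of_mem (mem_insert_of_mem (mem_sdiff.mpr ⟨mem_univ _, hz⟩))
  exact BF w u v z₁ z₂ ⟨huw.symm, hvw.symm, huv, hwz z₁ hz₁C, hwz z₂ hz₂C, hz₁z₂,
    Ne.symm hz₁u, fun h => hz₂C (h ▸ huC), Ne.symm hz₁v, fun h => hz₂C (h ▸ hvC)⟩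

lemma minDegFalse (BF : ∀ c a b d e : Fin n, ¬ IsBowtie G c a b d e)
    (hdeg : ∀ v, n / 2 + 1 ≤ G.degree v) (hn : 6 ≤ n) : False := by
  classical
  have hn0 : 0 < n := by omega
  set u : Fin n := ⟨0, hn0⟩ with hu
  have hdu : 4 ≤ G.degree u := le_trans (by omega) (hdeg u)
  have hne : ∃ v, v ∈ G.neighborFinset u := by
    apply card_pos.mp; rw [card_neighborFinset_eq_degree]; omega
  obtain ⟨v, hv⟩ := hne
  rw [mem_neighborFinset] at hv
  obtain ⟨w, huw, hvw'⟩ := common_nbr G hdeg u v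
  have hvw : G.Adj v w := hvw'
  -- a₁ ∈ N(u) \ {v,w}
  have ha : ∃ a, a ∈ (G.neighborFinset u) \ ({v, w} : Finset (Fin n)) := by
    apply card_pos.mp
    have h2 : (({v, w} : Finset (Fin n))).card ≤ 2 := by
      apply le_trans (card_insert_le _ _); simp
    have := nbr_diff G u ({v, w} : Finset (Fin n))
    omega
  obtain ⟨a₁, ha₁⟩ := ha
  rw [mem_sdiff, mem_neighborFinset] at ha₁
  obtain ⟨hua, hans⟩ := ha₁
  have hav : a₁ ≠ v := fun h => hans (by simp [h])
  have haw : a₁ ≠ w := fun h => hans (by simp [h])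
  obtain ⟨t, hut, hat⟩ := common_nbr G hdeg u a₁
  have : t = v ∨ t = w := by
    by_contra hcon
    push_neg at hcon
    exact BF u v w a₁ t ⟨hv, huw, hvw, hua, hut, hat,
      Ne.symm hav, Ne.symm hcon.1, Ne.symm haw, Ne.symm hcon.2⟩
  rcases this with rfl | rfl
  · exact core G BF hdeg hn u t w a₁ hv huw hvw hua hav haw hat.symm
  · exact core G BF hdeg hn u t v a₁ huw hv hvw.symm hua haw hav hat.symm

end MinDeg
section Del
variable {m : ℕ} (G : SimpleGraph (Fin (m + 1))) [DecidableRel G.Adj] (v : Fin (m + 1))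




lemma comap_BF (BF : ∀ c a b d e, ¬ IsBowtie G c a b d e) :
    ∀ c a b d e, ¬ IsBowtie (G.comap v.succAbove) c a b d e := by
  intro c a b d e h
  obtain ⟨h1, h2, h3, h4, h5, h6, h7, h8, h9, h10⟩ := h
  have inj := Fin.succAbove_right_injective (p := v)
  exact BF _ _ _ _ _ ⟨h1, h2, h3, h4, h5, h6,
    fun h => h7 (inj h), fun h => h8 (inj h), fun h => h9 (inj h), fun h => h10 (inj h)⟩

lemma delete_card :
    G.edgeFinset.card ≤ (G.comap v.succAbove).edgeFinset.card + G.degree v := by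
  classical
  have hsplit := card_filter_add_card_filter_not (s := G.edgeFinset)
    (p := fun e => v ∈ e)
  have hinc : (G.edgeFinset.filter (fun e => v ∈ e)).card = G.degree v := by
    rw [← incidenceFinset_eq_filter, card_incidenceFinset_eq_degree]
  have hsub : G.edgeFinset.filter (fun e => ¬ v ∈ e) ⊆
      (G.comap v.succAbove).edgeFinset.image (Sym2.map v.succAbove) := by
    intro e he
    rw [mem_filter] at he
    obtain ⟨he1, he2⟩ := he
    induction e with
    | _ x y =>
      rw [mem_edgeFinset, mem_edgeSet] at he1
      have hx : x ≠ v := fun h => he2 (by rw [h]; exact Sym2.mem_mk_left _ _)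
      have hy : y ≠ v := fun h => he2 (by rw [h]; exact Sym2.mem_mk_right _ _)
      obtain ⟨x', hx'⟩ := Fin.exists_succAbove_eq hx
      obtain ⟨y', hy'⟩ := Fin.exists_succAbove_eq hy
      refine mem_image.mpr ⟨s(x', y'), ?_, by simp [hx', hy']⟩
      rw [mem_edgeFinset, mem_edgeSet]
      show G.Adj (v.succAbove x') (v.succAbove y')
      rw [hx', hy']; exact he1
  have := card_le_card hsub
  have himg := card_image_le (s := (G.comap v.succAbove).edgeFinset)
    (f := Sym2.map v.succAbove)
  omega

end Del


lemma base5 (G : SimpleGraph (Fin 5)) [DecidableRel G.Adj]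
    (BF : ∀ c a b d e, ¬ IsBowtie G c a b d e) : G.edgeFinset.card ≤ 7 := by
  classical
  by_contra hcard
  push_neg at hcard
  -- a vertex of degree ≥ 4
  have hsum := G.sum_degrees_eq_twice_card_edges
  have hdeg : ∃ u : Fin 5, 4 ≤ G.degree u := by
    by_contra hc
    push_neg at hc
    have : ∑ v, G.degree v ≤ ∑ _v : Fin 5, 3 :=
      Finset.sum_le_sum (fun i _ => Nat.lt_succ_iff.mp (hc i))
    simp at this
    omega
  obtain ⟨u, hu⟩ := hdeg
  have hudeg : ∀ x : Fin 5, x ≠ u → G.Adj u x := by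
    have hsub : G.neighborFinset u ⊆ univ.erase u := by
      intro x hx
      rw [mem_neighborFinset] at hx
      exact mem_erase.mpr ⟨hx.ne', mem_univ _⟩
    have hcard4 : (univ.erase u).card = 4 := by
      rw [card_erase_of_mem (mem_univ _)]; simp
    have : G.neighborFinset u = univ.erase u := by
      apply eq_of_subset_of_card_le hsub
      rw [card_neighborFinset_eq_degree, hcard4]; exact hu
    intro x hx
    rw [← mem_neighborFinset, this]
    exact mem_erase.mpr ⟨hx, mem_univ _⟩
  have hdle : G.degree u ≤ 4 := by
    have := G.degree_lt_card_verts u; simp at this; omega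
  -- the four other vertices
  set a := u + 1 with ha
  set b := u + 2 with hb
  set c := u + 3 with hc
  set d := u + 4 with hd
  have hinj : ∀ i j : Fin 5, u + i = u + j → i = j := fun i j h => by
    have := congrArg (fun x => x - u) h
    simpa [add_comm, add_sub_cancel_right] using this
  have hne0 : ∀ i : Fin 5, i ≠ 0 → u + i ≠ u := by
    intro i hi h
    exact hi (hinj i 0 (by simpa using h))
  -- S : edges avoiding u
  set S := G.edgeFinset.filter (fun e => ¬ u ∈ e) with hS
  have hS4 : 4 ≤ S.card := by
    have hsplit := card_filter_add_card_filter_not (s := G.edgeFinset)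
      (p := fun e => u ∈ e)
    have hinc : (G.edgeFinset.filter (fun e => u ∈ e)).card = G.degree u := by
      rw [← incidenceFinset_eq_filter, card_incidenceFinset_eq_degree]
    rw [hS]
    omega
  -- S is contained in pairs from {a,b,c,d}
  have hmemS : ∀ e ∈ S, ∀ x ∈ e, x = a ∨ x = b ∨ x = c ∨ x = d := by
    intro e he x hx
    rw [hS, mem_filter] at he
    have hxu : x ≠ u := fun h => he.2 (h ▸ hx)
    have : x = u + (x - u) := (add_sub_cancel u x).symm
    have hnz : x - u ≠ 0 := fun h => hxu (by rw [this, h, add_zero])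
    have : x - u = 1 ∨ x - u = 2 ∨ x - u = 3 ∨ x - u = 4 := by
      revert hnz; generalize x - u = i; revert i; decide
    rcases this with h | h | h | h
    · left; rw [ha, ‹x = u + (x - u)›, h]
    · right; left; rw [hb, ‹x = u + (x - u)›, h]
    · right; right; left; rw [hc, ‹x = u + (x - u)›, h]
    · right; right; right; rw [hd, ‹x = u + (x - u)›, h]
  have hSsub : S ⊆ G.edgeFinset := filter_subset _ _
  have hSadj : ∀ x y : Fin 5, s(x,y) ∈ S → G.Adj x y := by
    intro x y h
    have := hSsub h
    rw [mem_edgeFinset, mem_edgeSet] at this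
    exact this
  have hab : a ≠ b := fun h => by have := hinj 1 2 h; simp at this
  have hac : a ≠ c := fun h => by have := hinj 1 3 h; simp at this
  have had : a ≠ d := fun h => by have := hinj 1 4 h; simp at this
  have hbc : b ≠ c := fun h => by have := hinj 2 3 h; simp at this
  have hbd : b ≠ d := fun h => by have := hinj 2 4 h; simp at this
  have hcd : c ≠ d := fun h => by have := hinj 3 4 h; simp at this
  have hSP : S ⊆ (({s(a,b), s(c,d)} : Finset (Sym2 (Fin 5))) ∪ {s(a,c), s(b,d)}) ∪
      {s(a,d), s(b,c)} := by
    intro e he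
    have hedge : e ∈ G.edgeFinset := hSsub he
    induction e with
    | _ x y =>
      have hadj : G.Adj x y := by rw [mem_edgeFinset, mem_edgeSet] at hedge; exact hedge
      have hx := hmemS _ he x (Sym2.mem_mk_left _ _)
      have hy := hmemS _ he y (Sym2.mem_mk_right _ _)
      have hxy : x ≠ y := hadj.ne
      simp only [mem_union, mem_insert, mem_singleton]
      rcases hx with rfl | rfl | rfl | rfl <;> rcases hy with rfl | rfl | rfl | rfl <;>
        first
        | exact absurd rfl hxy
        | simp [Sym2.eq_iff]
  have inter_pair_le : ∀ (x y : Sym2 (Fin 5)), ¬ (x ∈ S ∧ y ∈ S) →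
      (S ∩ ({x, y} : Finset (Sym2 (Fin 5)))).card ≤ 1 := by
    intro x y h
    rcases not_and_or.mp h with h | h
    · calc (S ∩ ({x, y} : Finset (Sym2 (Fin 5)))).card ≤ ({y} : Finset (Sym2 (Fin 5))).card := by
            apply card_le_card
            intro t ht
            rw [mem_inter, mem_insert, mem_singleton] at ht
            rcases ht.2 with rfl | rfl
            · exact absurd ht.1 h
            · exact mem_singleton_self _
        _ = 1 := card_singleton _
    · calc (S ∩ ({x, y} : Finset (Sym2 (Fin 5)))).card ≤ ({x} : Finset (Sym2 (Fin 5))).card := by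
            apply card_le_card
            intro t ht
            rw [mem_inter, mem_insert, mem_singleton] at ht
            rcases ht.2 with rfl | rfl
            · exact mem_singleton_self _
            · exact absurd ht.1 h
        _ = 1 := card_singleton _
  have couples : (G.Adj a b ∧ G.Adj c d) ∨ (G.Adj a c ∧ G.Adj b d) ∨
      (G.Adj a d ∧ G.Adj b c) := by
    by_contra hcon
    push_neg at hcon
    have huS : ∀ x y : Fin 5, G.Adj x y → x ≠ u → y ≠ u → s(x,y) ∈ S := by
      intro x y hxy hxu hyu
      rw [hS, mem_filter, mem_edgeFinset]
      refine ⟨hxy, ?_⟩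
      rw [Sym2.mem_iff]
      rintro (rfl | rfl)
      · exact hxu rfl
      · exact hyu rfl
    have k1 : ¬ (s(a,b) ∈ S ∧ s(c,d) ∈ S) := by
      rintro ⟨p, q⟩; exact hcon.1 (hSadj _ _ p) (hSadj _ _ q)
    have k2 : ¬ (s(a,c) ∈ S ∧ s(b,d) ∈ S) := by
      rintro ⟨p, q⟩; exact hcon.2.1 (hSadj _ _ p) (hSadj _ _ q)
    have k3 : ¬ (s(a,d) ∈ S ∧ s(b,c) ∈ S) := by
      rintro ⟨p, q⟩; exact hcon.2.2 (hSadj _ _ p) (hSadj _ _ q)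
    have hSeq : S = (S ∩ ({s(a,b), s(c,d)} : Finset (Sym2 (Fin 5)))) ∪
        (S ∩ {s(a,c), s(b,d)}) ∪ (S ∩ {s(a,d), s(b,c)}) := by
      rw [← inter_union_distrib_left, ← inter_union_distrib_left]
      exact (inter_eq_left.mpr hSP).symm
    have : S.card ≤ 3 := by
      rw [hSeq]
      calc _ ≤ ((S ∩ ({s(a,b), s(c,d)} : Finset (Sym2 (Fin 5)))) ∪
          (S ∩ {s(a,c), s(b,d)})).card + (S ∩ ({s(a,d), s(b,c)} : Finset (Sym2 (Fin 5)))).card :=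
            card_union_le _ _
        _ ≤ (S ∩ ({s(a,b), s(c,d)} : Finset (Sym2 (Fin 5)))).card +
            (S ∩ ({s(a,c), s(b,d)} : Finset (Sym2 (Fin 5)))).card +
            (S ∩ ({s(a,d), s(b,c)} : Finset (Sym2 (Fin 5)))).card := by
              have := card_union_le (S ∩ ({s(a,b), s(c,d)} : Finset (Sym2 (Fin 5))))
                (S ∩ ({s(a,c), s(b,d)} : Finset (Sym2 (Fin 5))))
              omega
        _ ≤ 1 + 1 + 1 := by
              have := inter_pair_le _ _ k1
              have := inter_pair_le _ _ k2
              have := inter_pair_le _ _ k3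
              omega
        _ = 3 := rfl
    omega
  have hadjua : G.Adj u a := hudeg a (hne0 1 (by decide))
  have hadjub : G.Adj u b := hudeg b (hne0 2 (by decide))
  have hadjuc : G.Adj u c := hudeg c (hne0 3 (by decide))
  have hadjud : G.Adj u d := hudeg d (hne0 4 (by decide))
  rcases couples with ⟨p, q⟩ | ⟨p, q⟩ | ⟨p, q⟩
  · exact BF u a b c d ⟨hadjua, hadjub, p, hadjuc, hadjud, q, hac, had, hbc, hbd⟩
  · exact BF u a c b d ⟨hadjua, hadjuc, p, hadjub, hadjud, q, hab, had, Ne.symm hbc, hcd⟩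
  · exact BF u a d b c ⟨hadjua, hadjud, p, hadjub, hadjuc, q, hab, hac, Ne.symm hbd, Ne.symm hcd⟩


lemma upperBound : ∀ (n : ℕ), 5 ≤ n → ∀ G : SimpleGraph (Fin n),
    (∀ c a b d e : Fin n, ¬ IsBowtie G c a b d e) → edgeCount G ≤ n ^ 2 / 4 + 1 := by
  intro n hn
  induction n, hn using Nat.le_induction with
  | base =>
    intro G BF
    letI : DecidableRel G.Adj := Classical.decRel _
    rw [edgeCount_eq]
    exact base5 G BF
  | succ n hn ih =>
    intro G BF
    letI : DecidableRel G.Adj := Classical.decRel _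
    by_cases hmin : ∀ v, (n + 1) / 2 + 1 ≤ G.degree v
    · exact absurd (minDegFalse G BF hmin (by omega)) (fun h => h)
    · push_neg at hmin
      obtain ⟨v, hv⟩ := hmin
      have hv' : G.degree v ≤ (n + 1) / 2 := by omega
      have BF' := comap_BF G v BF
      have hIH := ih (G.comap v.succAbove) BF'
      have hdel := delete_card G v
      letI : DecidableRel (G.comap v.succAbove).Adj := Classical.decRel _
      rw [edgeCount_eq] at hIH ⊢
      have harith : n ^ 2 / 4 + 1 + (n + 1) / 2 ≤ (n + 1) ^ 2 / 4 + 1 := by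
        obtain ⟨k, rfl | rfl⟩ := Nat.even_or_odd' n
        · have e1 : (2 * k) ^ 2 = (k * k) * 4 := by ring
          have e2 : (2 * k + 1) ^ 2 = (k * k + k) * 4 + 1 := by ring
          omega
        · have e1 : (2 * k + 1) ^ 2 = (k * k + k) * 4 + 1 := by ring
          have e2 : (2 * k + 1 + 1) ^ 2 = (k * k + 2 * k + 1) * 4 := by ring
          omega
      calc #G.edgeFinset ≤ #(G.comap v.succAbove).edgeFinset + G.degree v := hdel
        _ ≤ n ^ 2 / 4 + 1 + (n + 1) / 2 := by
            have : #(G.comap v.succAbove).edgeFinset = #(G.comap v.succAbove).edgeFinset := rfl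
            omega
        _ ≤ (n + 1) ^ 2 / 4 + 1 := harith

end Aux

theorem turan_number_of_bowtie (n : ℕ) (hn : 5 ≤ n) :
    IsGreatest {m : ℕ | ∃ G : SimpleGraph (Fin n),
      (∀ c a b d e : Fin n, ¬ IsBowtie G c a b d e) ∧ edgeCount G = m}
      (n ^ 2 / 4 + 1) := by
  constructor
  · exact ⟨Gext n, Gext_BF n hn, by rw [edgeCount_eq]; exact Gext_card n hn⟩
  · rintro m ⟨G, BF, rfl⟩
    exact upperBound n hn G BF
end

section
/- For any integers k ≥ m ≥ 0, there exists a triangle-free graph on 4k+1 vertices in which exactly one vertex has degree 2m and the remaining 4k vertices each have degree k. -/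
open Finset

namespace TFcons

abbrev Vtx (k : ℕ) := Option (Bool × Bool × Fin k)

variable (k m : ℕ)

def adj0 : Vtx k → Vtx k → Prop
  | some (false, p, t), some (true, p', t') =>
      (p = p' ∧ ¬((t : ℕ) = (t' : ℕ) ∧ (t : ℕ) < m)) ∨
      (p = true ∧ p' = false ∧ (t : ℕ) = (t' : ℕ) ∧ (t : ℕ) < m)
  | some (false, false, t), none => (t : ℕ) < m
  | some (true, true, t), none => (t : ℕ) < m
  | _, _ => False

def G : SimpleGraph (Vtx k) where
  Adj v w := adj0 k m v w ∨ adj0 k m w v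
  symm := ⟨fun v w h => h.symm⟩
  loopless := ⟨fun v h => by
    rcases v with _ | ⟨_ | _, _ | _, t⟩ <;> simp [adj0] at h⟩

lemma G_adj (v w : Vtx k) : (G k m).Adj v w ↔ adj0 k m v w ∨ adj0 k m w v := Iff.rfl

def nb : Vtx k → Fin k → Vtx k
  | some (false, p, t), t' =>
      if t' = t ∧ (t : ℕ) < m then (if p then some (true, false, t) else none)
      else some (true, p, t')
  | some (true, p, t), t' =>
      if t' = t ∧ (t : ℕ) < m then (if p then none else some (false, true, t))
      else some (false, p, t')
  | none, _ => none

lemma nb_inj (x : Bool × Bool × Fin k) : Function.Injective (nb k m (some x)) := by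
  rcases x with ⟨s, p, t⟩
  intro a b hab
  rcases s <;> rcases p <;>
    simp only [nb] at hab <;>
    split_ifs at hab with h1 h2 h2 <;>
    simp_all [Fin.ext_iff]

lemma adj_iff (x : Bool × Bool × Fin k) (w : Vtx k) :
    (G k m).Adj (some x) w ↔ ∃ t', nb k m (some x) t' = w := by
  rcases x with ⟨s, p, t⟩
  rcases w with _ | ⟨s', p', t'⟩
  · -- w = none
    constructor
    · rintro (h | h)
      · rcases s <;> rcases p <;> simp [adj0] at h
        · exact ⟨t, by simp [nb, h]⟩
        · exact ⟨t, by simp [nb, h]⟩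
      · simp [adj0] at h
    · rintro ⟨t'', h⟩
      rcases s <;> rcases p <;> simp only [nb] at h <;> split_ifs at h with hc <;>
        simp_all [G_adj, adj0]
  · constructor
    · rintro (h | h)
      · rcases s <;> rcases s' <;> simp [adj0] at h
        -- A to B only
        rcases h with ⟨hp, hne⟩ | ⟨hp, hp', ht, hm⟩
        · refine ⟨t', ?_⟩
          have hne' : ¬(t' = t ∧ (t : ℕ) < m) := by
            rintro ⟨rfl, h2⟩
            exact absurd (hne rfl) (by omega)
          simp only [nb, if_neg hne']
          simp [hp]
        · have htt := Fin.ext (ht : (t:ℕ) = t')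
          subst htt
          refine ⟨t, ?_⟩
          simp [nb, hm, hp, hp']
      · rcases s <;> rcases s' <;> simp [adj0] at h
        -- w = A, v = B
        rcases h with ⟨hp, hne⟩ | ⟨hp', hp, ht, hm⟩
        · refine ⟨t', ?_⟩
          have hne' : ¬(t' = t ∧ (t : ℕ) < m) := by
            rintro ⟨rfl, h2⟩
            exact absurd (hne rfl) (by omega)
          simp only [nb, if_neg hne']
          simp [hp]
        · refine ⟨t, ?_⟩
          simp [nb, (show (t : ℕ) < m by omega), hp, hp', Fin.ext_iff, ht]
    · rintro ⟨t'', h⟩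
      rcases s <;> rcases p <;> simp only [nb] at h <;> split_ifs at h with hc <;>
      first
        | exact Option.noConfusion h
        | (simp only [Option.some.injEq, Prod.mk.injEq] at h
           obtain ⟨rfl, rfl, rfl⟩ := h
           simp only [Fin.ext_iff] at hc
           simp_all [G_adj, adj0, Fin.ext_iff] <;> omega)

lemma adj_none_iff (w : Vtx k) :
    (G k m).Adj none w ↔
      (∃ t : Fin k, (t : ℕ) < m ∧ w = some (false, false, t)) ∨
      (∃ t : Fin k, (t : ℕ) < m ∧ w = some (true, true, t)) := by
  rcases w with _ | ⟨_ | _, _ | _, t⟩ <;> simp [G_adj, adj0]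

set_option maxHeartbeats 2000000 in
lemma no_tri (a b c : Vtx k) (hab : (G k m).Adj a b) (hac : (G k m).Adj a c)
    (hbc : (G k m).Adj b c) : False := by
  rw [G_adj] at hab hac hbc
  rcases a with _ | ⟨_ | _, _ | _, ta⟩ <;> rcases b with _ | ⟨_ | _, _ | _, tb⟩ <;>
    rcases c with _ | ⟨_ | _, _ | _, tc⟩ <;>
    simp only [adj0, or_false, false_or, or_self] at hab hac hbc <;>
    simp_all

lemma deg_some (x : Bool × Bool × Fin k) :
    Nat.card {w // (G k m).Adj (some x) w} = k := by
  have e1 : {w // (G k m).Adj (some x) w} ≃ Set.range (nb k m (some x)) :=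
    Equiv.subtypeEquivRight (fun w => by
      rw [adj_iff]; simp [Set.range, eq_comm])
  rw [Nat.card_congr e1, Nat.card_range_of_injective (nb_inj k m x), Nat.card_eq_fintype_card,
    Fintype.card_fin]

lemma deg_none (h : m ≤ k) : Nat.card {w // (G k m).Adj (none : Vtx k) w} = 2 * m := by
  classical
  set f : Bool × Fin m → Vtx k := fun bt =>
    some (bt.1, bt.1, ⟨bt.2, lt_of_lt_of_le bt.2.2 h⟩) with hf
  have hinj : Function.Injective f := by
    rintro ⟨b1, t1⟩ ⟨b2, t2⟩ hb
    simp [hf, Fin.ext_iff] at hb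
    simp [Prod.ext_iff, Fin.ext_iff, hb.1, hb.2]
  have e1 : {w // (G k m).Adj (none : Vtx k) w} ≃ Set.range f :=
    Equiv.subtypeEquivRight (fun w => by
      rw [adj_none_iff]
      constructor
      · rintro (⟨t, ht, rfl⟩ | ⟨t, ht, rfl⟩)
        · exact ⟨(false, ⟨t, ht⟩), by simp [hf]⟩
        · exact ⟨(true, ⟨t, ht⟩), by simp [hf]⟩
      · rintro ⟨⟨b, t⟩, rfl⟩
        rcases b
        · exact Or.inl ⟨_, by simp [hf, t.2], rfl⟩
        · exact Or.inr ⟨_, by simp [hf, t.2], rfl⟩)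
  rw [Nat.card_congr e1, Nat.card_range_of_injective hinj, Nat.card_eq_fintype_card]
  simp [two_mul]

lemma card_vtx : Fintype.card (Vtx k) = 4 * k + 1 := by
  simp [Fintype.card_option, Fintype.card_prod]
  ring

end TFcons

theorem exists_trianglefree_one_special_vertex (k m : ℕ) (h : m ≤ k) :
    ∃ (G : SimpleGraph (Fin (4 * k + 1))) (u : Fin (4 * k + 1)),
      G.CliqueFree 3 ∧ nbrDeg G u = 2 * m ∧ ∀ v, v ≠ u → nbrDeg G v = k := by
  classical
  obtain ⟨e⟩ : Nonempty (TFcons.Vtx k ≃ Fin (4 * k + 1)) :=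
    ⟨Fintype.equivFinOfCardEq (TFcons.card_vtx k)⟩
  refine ⟨(TFcons.G k m).comap e.symm, e none, ?_, ?_, ?_⟩
  · intro s hs
    rw [SimpleGraph.is3Clique_iff] at hs
    obtain ⟨a, b, c, hab, hac, hbc, -⟩ := hs
    exact TFcons.no_tri k m _ _ _ hab hac hbc
  · have e1 : {w // ((TFcons.G k m).comap e.symm).Adj (e none) w} ≃
        {w // (TFcons.G k m).Adj none w} := by
      refine Equiv.subtypeEquiv e.symm (fun w => ?_)
      simp [SimpleGraph.comap]
    rw [nbrDeg, Nat.card_congr e1]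
    exact TFcons.deg_none k m h
  · intro v hv
    have hx : e.symm v ≠ none := fun hx => hv (by rw [← e.apply_symm_apply v, hx])
    obtain ⟨x, hxx⟩ : ∃ x, e.symm v = some x := Option.ne_none_iff_exists'.mp hx
    have e1 : {w // ((TFcons.G k m).comap e.symm).Adj v w} ≃
        {w // (TFcons.G k m).Adj (some x) w} := by
      refine Equiv.subtypeEquiv e.symm (fun w => ?_)
      simp [SimpleGraph.comap, hxx]
    rw [nbrDeg, Nat.card_congr e1]
    exact TFcons.deg_some k m x
end

section
/- Let a, b, α, β be non-negative integers such that |a − b| = 1, αa + βb is even, and 3a + 3b < α + β − 1. Then there exists a triangle-free graph on α + β vertices having exactly α vertices of degree a and exactly β vertices of degree b. -/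
open Finset

namespace TF

def Dnat (E : ℕ) : Finset ℕ := (Finset.range (E/2)).image (fun k => 2*k+1)

lemma mem_Dnat {E m : ℕ} (hE : Even E) : m ∈ Dnat E ↔ Odd m ∧ m < E := by
  obtain ⟨e, rfl⟩ := hE
  simp only [Dnat, mem_image, mem_range]
  constructor
  · rintro ⟨k, hk, rfl⟩
    have he : (e + e)/2 = e := by omega
    rw [he] at hk
    exact ⟨⟨k, by ring⟩, by omega⟩
  · rintro ⟨⟨k, rfl⟩, hm⟩
    exact ⟨k, by omega, by ring⟩

lemma card_Dnat (E : ℕ) : (Dnat E).card = E/2 := by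
  rw [Dnat, Finset.card_image_of_injective _ (fun x y h => by omega), Finset.card_range]

def DsetZ (E : ℕ) : Finset ℤ :=
  (Dnat E).image (fun m : ℕ => (m : ℤ)) ∪ (Dnat E).image (fun m : ℕ => -(m : ℤ))

lemma mem_DsetZ {E : ℕ} (hE : Even E) {δ : ℤ} :
    δ ∈ DsetZ E ↔ Odd δ ∧ δ.natAbs < E := by
  simp only [DsetZ, mem_union, mem_image]
  constructor
  · rintro (⟨m, hm, rfl⟩ | ⟨m, hm, rfl⟩) <;>
      obtain ⟨ho, hl⟩ := (mem_Dnat hE).mp hm <;>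
      obtain ⟨k, rfl⟩ := ho
    · exact ⟨⟨(k:ℤ), by push_cast; ring⟩, by omega⟩
    · exact ⟨⟨-(k:ℤ) - 1, by push_cast; ring⟩, by simp; omega⟩
  · rintro ⟨ho, hl⟩
    have hno : Odd δ.natAbs := Int.natAbs_odd.mpr ho
    rcases le_or_gt 0 δ with h | h
    · exact Or.inl ⟨δ.natAbs, (mem_Dnat hE).mpr ⟨hno, hl⟩, by omega⟩
    · exact Or.inr ⟨δ.natAbs, (mem_Dnat hE).mpr ⟨hno, hl⟩, by omega⟩

lemma neg_mem_DsetZ {E : ℕ} {δ : ℤ} (h : δ ∈ DsetZ E) : -δ ∈ DsetZ E := by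
  simp only [DsetZ, mem_union, mem_image] at h ⊢
  rcases h with ⟨m, hm, rfl⟩ | ⟨m, hm, rfl⟩
  · exact Or.inr ⟨m, hm, rfl⟩
  · exact Or.inl ⟨m, hm, by ring⟩

lemma card_DsetZ {E : ℕ} (hE : Even E) : (DsetZ E).card = E := by
  rw [DsetZ, Finset.card_union_of_disjoint]
  · rw [Finset.card_image_of_injective _ (fun x y h => by exact_mod_cast h),
      Finset.card_image_of_injective _ (fun x y h => by
        exact_mod_cast neg_inj.mp h),
      card_Dnat]
    obtain ⟨e, rfl⟩ := hE; omega
  · rw [Finset.disjoint_left]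
    rintro x hx hx'
    simp only [mem_image] at hx hx'
    obtain ⟨m, hm, rfl⟩ := hx
    obtain ⟨m', hm', h⟩ := hx'
    obtain ⟨k, rfl⟩ := ((mem_Dnat hE).mp hm).1
    obtain ⟨k', rfl⟩ := ((mem_Dnat hE).mp hm').1
    omega


/-- endpoint function for the matching: pair `i` is `(c*i, c*i+s)` -/
def eF (c s j : ℕ) : ℕ := c * (j/2) + (j % 2) * s

def EP (n c s : ℕ) (j : ℕ) : ZMod n := ((eF c s j : ℕ) : ZMod n)

/-- matching adjacency -/
def mAdj (n t c s : ℕ) (u v : ZMod n) : Prop :=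
  ∃ i < t, (u = EP n c s (2*i) ∧ v = EP n c s (2*i+1)) ∨
           (v = EP n c s (2*i) ∧ u = EP n c s (2*i+1))

/-- circulant adjacency -/
def cAdj (n E : ℕ) (u v : ZMod n) : Prop := ∃ δ ∈ DsetZ E, v - u = (δ : ZMod n)

lemma mAdj_symm {n t c s : ℕ} {u v : ZMod n} (h : mAdj n t c s u v) : mAdj n t c s v u := by
  obtain ⟨i, hi, h | h⟩ := h
  · exact ⟨i, hi, Or.inr h⟩
  · exact ⟨i, hi, Or.inl h⟩

lemma cAdj_symm {n E : ℕ} {u v : ZMod n} (h : cAdj n E u v) : cAdj n E v u := by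
  obtain ⟨δ, hδ, h⟩ := h
  exact ⟨-δ, neg_mem_DsetZ hδ, by push_cast; rw [← h]; ring⟩

/-- the graph: circulant symmetric-difference matching -/
def G (n E t c s : ℕ) : SimpleGraph (ZMod n) where
  Adj u v := u ≠ v ∧ Xor' (mAdj n t c s u v) (cAdj n E u v)
  symm := by
    refine ⟨?_⟩; rintro u v ⟨hne, h | h⟩
    · exact ⟨hne.symm, Or.inl ⟨mAdj_symm h.1, fun hc => h.2 (cAdj_symm hc)⟩⟩
    · exact ⟨hne.symm, Or.inr ⟨cAdj_symm h.1, fun hm => h.2 (mAdj_symm hm)⟩⟩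
  loopless := ⟨fun v h => h.1 rfl⟩

lemma G_adj {n E t c s : ℕ} {u v : ZMod n} :
    (G n E t c s).Adj u v ↔ u ≠ v ∧ Xor' (mAdj n t c s u v) (cAdj n E u v) := Iff.rfl

/-- an integer small in absolute value and nonzero is nonzero mod n -/
lemma intCast_ne_zero {n : ℕ} {δ : ℤ} (h0 : δ ≠ 0) (hlt : δ.natAbs < n) :
    (δ : ZMod n) ≠ 0 := by
  intro h
  have := (ZMod.intCast_zmod_eq_zero_iff_dvd δ n).mp h
  have := Int.eq_zero_of_abs_lt_dvd this (by
    rw [Int.abs_eq_natAbs]; exact_mod_cast hlt)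
  exact h0 this

lemma natCast_inj_of_lt {n x y : ℕ} (hx : x < n) (hy : y < n) (h : (x : ZMod n) = y) :
    x = y := by
  haveI : NeZero n := ⟨by omega⟩
  have := congrArg ZMod.val h
  rwa [ZMod.val_cast_of_lt hx, ZMod.val_cast_of_lt hy] at this

lemma cAdj_rep {n E : ℕ} {u v : ZMod n} (hE : Even E) (h : cAdj n E u v) :
    ∃ δ : ℤ, Odd δ ∧ δ.natAbs < E ∧ (δ : ZMod n) = v - u := by
  obtain ⟨δ, hδ, h⟩ := h
  obtain ⟨ho, hlt⟩ := (mem_DsetZ hE).mp hδ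
  exact ⟨δ, ho, hlt, h.symm⟩

lemma eF_even (c s i : ℕ) : eF c s (2*i) = c*i := by
  simp [eF, Nat.mul_div_cancel_left, Nat.mul_mod_right]

lemma eF_odd (c s i : ℕ) : eF c s (2*i+1) = c*i + s := by
  have h1 : (2*i+1)/2 = i := by omega
  have h2 : (2*i+1) % 2 = 1 := by omega
  simp [eF, h1, h2]

lemma mAdj_rep {n t c s : ℕ} {u v : ZMod n} (hs : Odd s) (h : mAdj n t c s u v) :
    ∃ δ : ℤ, Odd δ ∧ δ.natAbs = s ∧ (δ : ZMod n) = v - u := by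
  obtain ⟨i, hi, ⟨hu, hv⟩ | ⟨hv, hu⟩⟩ := h
  · refine ⟨(s : ℤ), by exact_mod_cast hs, by simp, ?_⟩
    rw [hu, hv, EP, EP, eF_even, eF_odd]
    push_cast
    ring
  · refine ⟨-(s : ℤ), by simpa using (by exact_mod_cast hs : Odd (s:ℤ)).neg, by simp, ?_⟩
    rw [hu, hv, EP, EP, eF_even, eF_odd]
    push_cast
    ring


section Main

variable {n E t c s : ℕ}

/-- matched vertex set -/
def Mset (n t c s : ℕ) : Finset (ZMod n) := (Finset.range (2*t)).image (EP n c s)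

/-- base neighbourhood -/
def Nbase (n E : ℕ) (v : ZMod n) : Finset (ZMod n) :=
  (DsetZ E).image (fun δ : ℤ => v + (δ : ZMod n))

lemma mem_Nbase {v w : ZMod n} : w ∈ Nbase n E v ↔ cAdj n E v w := by
  simp only [Nbase, mem_image, cAdj]
  constructor
  · rintro ⟨δ, hδ, rfl⟩; exact ⟨δ, hδ, by ring⟩
  · rintro ⟨δ, hδ, h⟩; exact ⟨δ, hδ, by rw [← h]; ring⟩

variable (hn0 : 0 < n) (hE : Even E) (hs : Odd s)
  (hsn : s + 2*E ≤ n + 1) (h3E : 3*E ≤ n + 2) (hEln : E < n)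
  (hlt : ∀ j < 2*t, eF c s j < n)
  (hinj : ∀ j₁ < 2*t, ∀ j₂ < 2*t, eF c s j₁ = eF c s j₂ → j₁ = j₂)

include hlt hinj in
lemma EP_inj : ∀ j₁ < 2*t, ∀ j₂ < 2*t, EP n c s j₁ = EP n c s j₂ → j₁ = j₂ := by
  intro j₁ h₁ j₂ h₂ h
  exact hinj j₁ h₁ j₂ h₂ (natCast_inj_of_lt (hlt j₁ h₁) (hlt j₂ h₂) h)

include hlt hinj in
lemma card_Mset : (Mset n t c s).card = 2*t := by
  rw [Mset, Finset.card_image_of_injOn, Finset.card_range]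
  intro j₁ h₁ j₂ h₂ h
  exact EP_inj hlt hinj j₁ (mem_range.mp h₁) j₂ (mem_range.mp h₂) h

lemma mem_Mset_of_mAdj {u v : ZMod n} (h : mAdj n t c s u v) :
    u ∈ Mset n t c s ∧ v ∈ Mset n t c s := by
  obtain ⟨i, hi, ⟨hu, hv⟩ | ⟨hv, hu⟩⟩ := h <;>
    exact ⟨by rw [hu]; exact mem_image_of_mem _ (mem_range.mpr (by omega)),
           by rw [hv]; exact mem_image_of_mem _ (mem_range.mpr (by omega))⟩

lemma exists_partner {v : ZMod n} (hv : v ∈ Mset n t c s) : ∃ w, mAdj n t c s v w := by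
  obtain ⟨j, hj, rfl⟩ := mem_image.mp hv
  rw [mem_range] at hj
  rcases Nat.even_or_odd j with ⟨i, rfl⟩ | ⟨i, rfl⟩
  · exact ⟨EP n c s (2*i+1), i, by omega, Or.inl ⟨by rw [two_mul], rfl⟩⟩
  · exact ⟨EP n c s (2*i), i, by omega, Or.inr ⟨rfl, by rw [two_mul]⟩⟩

include hlt hinj in
lemma mAdj_unique {u v w : ZMod n} (h1 : mAdj n t c s u v) (h2 : mAdj n t c s u w) :
    v = w := by
  obtain ⟨i, hi, ⟨hu1, hv1⟩ | ⟨hv1, hu1⟩⟩ := h1 <;>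
    obtain ⟨j, hj, ⟨hu2, hw2⟩ | ⟨hw2, hu2⟩⟩ := h2 <;>
    [skip; skip; skip; skip] <;>
    rw [hu2] at hu1
  · have := EP_inj hlt hinj _ (by omega) _ (by omega) hu1
    have hij : i = j := by omega
    rw [hv1, hw2, hij]
  · have := EP_inj hlt hinj _ (by omega) _ (by omega) hu1
    omega
  · have := EP_inj hlt hinj _ (by omega) _ (by omega) hu1
    omega
  · have := EP_inj hlt hinj _ (by omega) _ (by omega) hu1
    have hij : i = j := by omega
    rw [hv1, hw2, hij]

include hlt hinj in
lemma mAdj_ne {v w : ZMod n} (h : mAdj n t c s v w) : v ≠ w := by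
  obtain ⟨i, hi, ⟨hu, hv⟩ | ⟨hv, hu⟩⟩ := h <;>
    · rintro rfl
      rw [hu] at hv
      have := EP_inj hlt hinj _ (by omega) _ (by omega) hv
      omega

include hE hEln in
lemma cAdj_ne {v w : ZMod n} (h : cAdj n E v w) : v ≠ w := by
  obtain ⟨δ, hδ, h⟩ := h
  obtain ⟨ho, hlt'⟩ := (mem_DsetZ hE).mp hδ
  rintro rfl
  rw [sub_self] at h
  exact intCast_ne_zero (by rintro rfl; simp at ho) (by omega) h.symm

include hE hsn in
lemma card_Nbase (v : ZMod n) : (Nbase n E v).card = E := by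
  rw [Nbase, Finset.card_image_of_injOn, card_DsetZ hE]
  intro δ₁ h₁ δ₂ h₂ h
  obtain ⟨ho₁, hl₁⟩ := (mem_DsetZ hE).mp h₁
  obtain ⟨ho₂, hl₂⟩ := (mem_DsetZ hE).mp h₂
  by_contra hne
  have hz : ((δ₁ - δ₂ : ℤ) : ZMod n) = 0 := by
    push_cast
    have : (δ₁ : ZMod n) = δ₂ := by
      have := h
      simpa using this
    rw [this]; ring
  obtain ⟨k1, rfl⟩ := ho₁
  exact intCast_ne_zero (by omega) (by omega) hz

include hn0 in
lemma tri_contra {x y z : ZMod n} (δ₁ δ₂ δ₃ : ℤ)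
    (e₁ : (δ₁ : ZMod n) = y - x) (e₂ : (δ₂ : ZMod n) = z - y) (e₃ : (δ₃ : ZMod n) = x - z)
    (h₁ : Odd δ₁) (h₂ : Odd δ₂) (h₃ : Odd δ₃)
    (hb : δ₁.natAbs + δ₂.natAbs + δ₃.natAbs ≤ n - 1) : False := by
  have hz : ((δ₁ + δ₂ + δ₃ : ℤ) : ZMod n) = 0 := by
    push_cast
    rw [e₁, e₂, e₃]; ring
  obtain ⟨k1, rfl⟩ := h₁
  obtain ⟨k2, rfl⟩ := h₂
  obtain ⟨k3, rfl⟩ := h₃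
  exact intCast_ne_zero (by omega) (by omega) hz

include hn0 hE hs hsn h3E hlt hinj in
theorem G_cliqueFree : (G n E t c s).CliqueFree 3 := by
  intro S hS
  rw [SimpleGraph.is3Clique_iff] at hS
  obtain ⟨x, y, z, hxy, hxz, hyz, rfl⟩ := hS
  have hxyne := hxy.1
  have hxzne := hxz.1
  have hyzne := hyz.1
  -- classify
  rcases hxy.2 with ⟨m1, nc1⟩ | ⟨c1, nm1⟩ <;>
    rcases hyz.2 with ⟨m2, nc2⟩ | ⟨c2, nm2⟩ <;>
    rcases hxz.2 with ⟨m3, nc3⟩ | ⟨c3, nm3⟩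
  -- mmm
  · exact hxzne (mAdj_unique hlt hinj (mAdj_symm m1) m2)
  -- mmc: edges xy, yz matching
  · exact hxzne (mAdj_unique hlt hinj (mAdj_symm m1) m2)
  -- mcm: edges xy, xz matching
  · exact hyzne (mAdj_unique hlt hinj m1 m3)
  -- mcc
  · obtain ⟨δ₁, o₁, b₁, e₁⟩ := mAdj_rep hs m1
    obtain ⟨δ₂, o₂, b₂, e₂⟩ := cAdj_rep hE c2
    obtain ⟨δ₃, o₃, b₃, e₃⟩ := cAdj_rep hE (cAdj_symm c3)
    exact tri_contra hn0 δ₁ δ₂ δ₃ e₁ e₂ e₃ o₁ o₂ o₃ (by omega)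
  -- cmm: edges yz, xz matching
  · exact hxyne (mAdj_unique hlt hinj (mAdj_symm m3) (mAdj_symm m2))
  -- cmc
  · obtain ⟨δ₁, o₁, b₁, e₁⟩ := cAdj_rep hE c1
    obtain ⟨δ₂, o₂, b₂, e₂⟩ := mAdj_rep hs m2
    obtain ⟨δ₃, o₃, b₃, e₃⟩ := cAdj_rep hE (cAdj_symm c3)
    exact tri_contra hn0 δ₁ δ₂ δ₃ e₁ e₂ e₃ o₁ o₂ o₃ (by omega)
  -- ccm
  · obtain ⟨δ₁, o₁, b₁, e₁⟩ := cAdj_rep hE c1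
    obtain ⟨δ₂, o₂, b₂, e₂⟩ := cAdj_rep hE c2
    obtain ⟨δ₃, o₃, b₃, e₃⟩ := mAdj_rep hs (mAdj_symm m3)
    exact tri_contra hn0 δ₁ δ₂ δ₃ e₁ e₂ e₃ o₁ o₂ o₃ (by omega)
  -- ccc
  · obtain ⟨δ₁, o₁, b₁, e₁⟩ := cAdj_rep hE c1
    obtain ⟨δ₂, o₂, b₂, e₂⟩ := cAdj_rep hE c2
    obtain ⟨δ₃, o₃, b₃, e₃⟩ := cAdj_rep hE (cAdj_symm c3)
    exact tri_contra hn0 δ₁ δ₂ δ₃ e₁ e₂ e₃ o₁ o₂ o₃ (by omega)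


lemma natCard_eq {V : Type*} (P : V → Prop) (N : Finset V) (h : ∀ x, P x ↔ x ∈ N) :
    Nat.card {x // P x} = N.card := by
  rw [Nat.card_congr (Equiv.subtypeEquivRight h), Nat.card_eq_fintype_card, Fintype.card_coe]

include hE hEln in
lemma adj_unmatched {v : ZMod n} (hv : v ∉ Mset n t c s) (w : ZMod n) :
    (G n E t c s).Adj v w ↔ w ∈ Nbase n E v := by
  rw [G_adj]
  constructor
  · rintro ⟨hne, ⟨hm, -⟩ | ⟨hc, -⟩⟩
    · exact absurd (mem_Mset_of_mAdj hm).1 hv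
    · exact mem_Nbase.mpr hc
  · intro hw
    have hc := mem_Nbase.mp hw
    exact ⟨cAdj_ne hE hEln hc, Or.inr ⟨hc, fun hm => hv (mem_Mset_of_mAdj hm).1⟩⟩

include hE hEln hlt hinj in
lemma adj_matched_add {v w : ZMod n} (hm : mAdj n t c s v w) (hw : w ∉ Nbase n E v)
    (x : ZMod n) : (G n E t c s).Adj v x ↔ x ∈ insert w (Nbase n E v) := by
  rw [G_adj]
  constructor
  · rintro ⟨hne, ⟨hm', -⟩ | ⟨hc, -⟩⟩
    · rw [mAdj_unique hlt hinj hm' hm] at *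
      exact mem_insert_self _ _
    · exact mem_insert_of_mem (mem_Nbase.mpr hc)
  · intro hx
    rcases mem_insert.mp hx with rfl | hx'
    · exact ⟨mAdj_ne hlt hinj hm, Or.inl ⟨hm, fun hc => hw (mem_Nbase.mpr hc)⟩⟩
    · have hc := mem_Nbase.mp hx'
      refine ⟨cAdj_ne hE hEln hc, Or.inr ⟨hc, fun hm' => ?_⟩⟩
      rw [mAdj_unique hlt hinj hm' hm] at hx'
      exact hw hx'

include hE hEln hlt hinj in
lemma adj_matched_del {v w : ZMod n} (hm : mAdj n t c s v w) (hw : w ∈ Nbase n E v)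
    (x : ZMod n) : (G n E t c s).Adj v x ↔ x ∈ (Nbase n E v).erase w := by
  rw [G_adj]
  constructor
  · rintro ⟨hne, ⟨hm', hnc⟩ | ⟨hc, nm⟩⟩
    · obtain rfl := mAdj_unique hlt hinj hm' hm
      exact absurd (mem_Nbase.mp hw) hnc
    · refine Finset.mem_erase.mpr ⟨fun hxw => ?_, mem_Nbase.mpr hc⟩
      subst hxw
      exact nm hm
  · intro hx
    obtain ⟨hxw, hx'⟩ := Finset.mem_erase.mp hx
    have hc := mem_Nbase.mp hx'
    refine ⟨cAdj_ne hE hEln hc, Or.inr ⟨hc, fun hm' => hxw (mAdj_unique hlt hinj hm' hm)⟩⟩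

include hE hs in
lemma partner_mem_del (hsE : s < E) {v w : ZMod n} (hm : mAdj n t c s v w) :
    w ∈ Nbase n E v := by
  obtain ⟨δ, ho, hb, he⟩ := mAdj_rep hs hm
  refine mem_Nbase.mpr ⟨δ, (mem_DsetZ hE).mpr ⟨ho, by omega⟩, he.symm⟩

include hE hs hsn in
lemma partner_not_mem_add (hsE : E < s) {v w : ZMod n} (hm : mAdj n t c s v w) :
    w ∉ Nbase n E v := by
  intro hmem
  obtain ⟨δ', hδ', he'⟩ := mem_Nbase.mp hmem
  obtain ⟨ho', hb'⟩ := (mem_DsetZ hE).mp hδ'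
  obtain ⟨δ, ho, hb, he⟩ := mAdj_rep hs hm
  have hz : ((δ - δ' : ℤ) : ZMod n) = 0 := by
    push_cast
    rw [he, ← he']
    ring
  have hne : δ - δ' ≠ 0 := by
    intro h0
    have : δ = δ' := by omega
    omega
  have hle : (δ - δ').natAbs ≤ δ.natAbs + δ'.natAbs := Int.natAbs_sub_le δ δ'
  exact intCast_ne_zero hne (by omega) hz

include hn0 hE hs hsn h3E hEln hlt hinj in
theorem exists_add (hadd : E < s) :
    ∃ (GG : SimpleGraph (ZMod n)) (M : Finset (ZMod n)), GG.CliqueFree 3 ∧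
      M.card = 2*t ∧ ∀ v, nbrDeg GG v = if v ∈ M then E+1 else E := by
  refine ⟨G n E t c s, Mset n t c s, G_cliqueFree hn0 hE hs hsn h3E hlt hinj,
    card_Mset hlt hinj, fun v => ?_⟩
  by_cases hv : v ∈ Mset n t c s
  · obtain ⟨w, hm⟩ := exists_partner hv
    have hw := partner_not_mem_add hE hs hsn hadd hm
    rw [nbrDeg, natCard_eq _ _ (adj_matched_add hE hEln hlt hinj hm hw),
      Finset.card_insert_of_notMem hw, card_Nbase hE hsn, if_pos hv]
  · rw [nbrDeg, natCard_eq _ _ (adj_unmatched hE hEln hv), card_Nbase hE hsn, if_neg hv]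

include hn0 hE hs hsn h3E hEln hlt hinj in
theorem exists_del (hdel : s < E) :
    ∃ (GG : SimpleGraph (ZMod n)) (M : Finset (ZMod n)), GG.CliqueFree 3 ∧
      M.card = 2*t ∧ ∀ v, nbrDeg GG v = if v ∈ M then E-1 else E := by
  refine ⟨G n E t c s, Mset n t c s, G_cliqueFree hn0 hE hs hsn h3E hlt hinj,
    card_Mset hlt hinj, fun v => ?_⟩
  by_cases hv : v ∈ Mset n t c s
  · obtain ⟨w, hm⟩ := exists_partner hv
    have hw := partner_mem_del hE hs hdel hm
    rw [nbrDeg, natCard_eq _ _ (adj_matched_del hE hEln hlt hinj hm hw),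
      Finset.card_erase_of_mem hw, card_Nbase hE hsn, if_pos hv]
  · rw [nbrDeg, natCard_eq _ _ (adj_unmatched hE hEln hv), card_Nbase hE hsn, if_neg hv]

end Main

lemma counts_formula {V : Type*} [Fintype V] [DecidableEq V] (M : Finset V) (f : V → ℕ)
    (X Y : ℕ) (hXY : X ≠ Y) (hf : ∀ v, f v = if v ∈ M then X else Y) (w : ℕ) :
    Nat.card {v // f v = w} =
      if w = X then M.card else if w = Y then Fintype.card V - M.card else 0 := by
  by_cases h1 : w = X
  · subst h1
    rw [if_pos rfl]
    apply natCard_eq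
    intro v
    rw [hf v]
    by_cases hv : v ∈ M
    · simp [hv]
    · simp [hv, Ne.symm hXY]
  · by_cases h2 : w = Y
    · subst h2
      rw [if_neg h1, if_pos rfl, ← Finset.card_compl]
      apply natCard_eq
      intro v
      rw [hf v]
      by_cases hv : v ∈ M
      · simp [hv, hXY]
      · simp [hv]
    · rw [if_neg h1, if_neg h2]
      have he : Nat.card {v // f v = w} = (∅ : Finset V).card := by
        apply natCard_eq
        intro v
        rw [hf v]
        by_cases hv : v ∈ M <;> simp [hv, Ne.symm h1, Ne.symm h2]
      simpa using he

lemma transfer {V W : Type*} [Fintype V] [Fintype W] [DecidableEq V] [DecidableEq W]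
    (e : V ≃ W) (GW : SimpleGraph W) (h3 : GW.CliqueFree 3) :
    ∃ GV : SimpleGraph V, GV.CliqueFree 3 ∧
      ∀ k, Nat.card {v // nbrDeg GV v = k} = Nat.card {w // nbrDeg GW w = k} := by
  refine ⟨GW.comap e, ?_, ?_⟩
  · intro S hS
    rw [SimpleGraph.is3Clique_iff] at hS
    obtain ⟨x, y, z, hxy, hxz, hyz, rfl⟩ := hS
    exact h3 {e x, e y, e z}
      (SimpleGraph.is3Clique_iff.mpr ⟨e x, e y, e z, hxy, hxz, hyz, rfl⟩)
  · intro k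
    have hdeg : ∀ v, nbrDeg (GW.comap e) v = nbrDeg GW (e v) := fun v =>
      Nat.card_congr (Equiv.subtypeEquiv e (fun w => Iff.rfl))
    exact Nat.card_congr (Equiv.subtypeEquiv e (fun v => by rw [hdeg]))

lemma eF_id (j : ℕ) : eF 2 1 j = j := by
  simp only [eF, mul_one]
  omega

theorem aux_del (n E t : ℕ) (hn0 : 0 < n) (hE : Even E) (hE2 : 2 ≤ E)
    (h2E : 2*E ≤ n) (h3E : 3*E ≤ n + 2) (ht : 2*t ≤ n) :
    ∃ (GG : SimpleGraph (ZMod n)) (M : Finset (ZMod n)), GG.CliqueFree 3 ∧ M.card = 2*t ∧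
      ∀ v, nbrDeg GG v = if v ∈ M then E-1 else E := by
  refine exists_del (c := 2) (s := 1) hn0 hE odd_one (by omega) h3E (by omega)
    (fun j hj => ?_) (fun j₁ h₁ j₂ h₂ h => ?_) (by omega)
  · rw [eF_id]; omega
  · rwa [eF_id, eF_id] at h

theorem aux_add (n E t : ℕ) (hn0 : 0 < n) (hE : Even E) (hn6 : 6*E + 5 ≤ n)
    (ht : 2*t ≤ n) (ht' : E < t → 2*t < n) :
    ∃ (GG : SimpleGraph (ZMod n)) (M : Finset (ZMod n)), GG.CliqueFree 3 ∧ M.card = 2*t ∧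
      ∀ v, nbrDeg GG v = if v ∈ M then E+1 else E := by
  obtain ⟨e, hEe⟩ := id hE
  set s : ℕ := if t ≤ E then E+1 else (if t % 2 = 1 then t else t+1) with hs_def
  have hs_odd : Odd s := by
    rw [hs_def]
    split_ifs with h1 h2
    · exact ⟨e, by omega⟩
    · exact Nat.odd_iff.mpr h2
    · exact Nat.odd_iff.mpr (by omega)
  have hEs : E < s := by rw [hs_def]; split_ifs <;> omega
  have hts : t ≤ s := by rw [hs_def]; split_ifs <;> omega
  have hstn : s + t ≤ n := by
    rw [hs_def]; split_ifs with h1 h2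
    · omega
    · omega
    · have := ht' (by omega); omega
  have hsn : s + 2*E ≤ n + 1 := by
    rw [hs_def]; split_ifs with h1 h2
    · omega
    · omega
    · have := ht' (by omega); omega
  clear hs_def
  refine exists_add (c := 1) (s := s) hn0 hE hs_odd hsn (by omega) (by omega)
    (fun j hj => ?_) (fun j₁ h₁ j₂ h₂ h => ?_) hEs
  · rcases Nat.even_or_odd j with ⟨i, hji⟩ | ⟨i, hji⟩
    · rw [hji, show i + i = 2*i by ring, eF_even]
      omega
    · rw [hji, eF_odd]
      omega
  · rcases Nat.even_or_odd j₁ with ⟨i₁, hi₁⟩ | ⟨i₁, hi₁⟩ <;>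
      rcases Nat.even_or_odd j₂ with ⟨i₂, hi₂⟩ | ⟨i₂, hi₂⟩ <;>
      rw [hi₁, hi₂] at h ⊢ <;>
      [rw [show i₁ + i₁ = 2*i₁ by ring, show i₂ + i₂ = 2*i₂ by ring, eF_even, eF_even] at h;
       rw [show i₁ + i₁ = 2*i₁ by ring, eF_even, eF_odd] at h;
       rw [show i₂ + i₂ = 2*i₂ by ring, eF_odd, eF_even] at h;
       rw [eF_odd, eF_odd] at h] <;>
      omega

/-- master lemma on `ZMod (γ + δ)`: `γ` vertices of degree `x`, `δ` of degree `y = x+1`. -/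
theorem master (x γ δ : ℕ)
    (heven : Even (γ*x + δ*(x+1))) (hsize : 3*x + 3*(x+1) + 1 < γ + δ) :
    ∃ GG : SimpleGraph (ZMod (γ + δ)),
      GG.CliqueFree 3 ∧ Nat.card {v // nbrDeg GG v = x} = γ ∧
      Nat.card {v // nbrDeg GG v = x+1} = δ := by
  set n := γ + δ with hn_def
  have hn0 : 0 < n := by omega
  haveI : NeZero n := ⟨by omega⟩
  have hcard : Fintype.card (ZMod n) = n := ZMod.card n
  rcases Nat.even_or_odd x with hx | hx
  · -- x even, odd degree is x+1 with count δ; δ even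
    have hδ : Even δ := by
      have h1 : Even (γ*x) := hx.mul_left γ
      have h2 : Even (δ*(x+1)) := (Nat.even_add.mp heven).mp h1
      rcases Nat.even_mul.mp h2 with h | h
      · exact h
      · rw [Nat.even_iff] at h ⊢
        rw [Nat.even_iff] at hx
        omega
    obtain ⟨u, hu⟩ := hδ
    by_cases hγ : γ = 0
    · -- all vertices degree x+1 : delete perfect matching from circulant (x+2)
      obtain ⟨GG, M, h3, hM, hf⟩ := aux_del n (x+2) u hn0 (by
          obtain ⟨e', he'⟩ := hx; exact ⟨e'+1, by omega⟩) (by omega) (by omega) (by omega) (by omega)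
      refine ⟨GG, h3, ?_, ?_⟩
      · rw [counts_formula M _ (x+2-1) (x+2) (by omega) hf x, if_neg (by omega), if_neg (by omega)]
        omega
      · rw [counts_formula M _ (x+2-1) (x+2) (by omega) hf (x+1), if_pos (by omega)]
        omega
    · -- add matching to circulant x
      obtain ⟨GG, M, h3, hM, hf⟩ := aux_add n x u hn0 hx (by omega) (by omega) (by omega)
      refine ⟨GG, h3, ?_, ?_⟩
      · rw [counts_formula M _ (x+1) x (by omega) hf x, if_neg (by omega), if_pos rfl, hcard]
        omega
      · rw [counts_formula M _ (x+1) x (by omega) hf (x+1), if_pos rfl]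
        omega
  · -- x odd, y = x+1 even: delete matching on γ vertices from circulant (x+1)
    have hγ : Even γ := by
      have hy : Even (x+1) := Nat.even_add_one.mpr (Nat.not_even_iff_odd.mpr hx)
      have h1 : Even (δ*(x+1)) := hy.mul_left δ
      have h2 : Even (γ*x) := (Nat.even_add.mp heven).mpr h1
      rcases Nat.even_mul.mp h2 with h | h
      · exact h
      · rw [Nat.odd_iff] at hx
        rw [Nat.even_iff] at h
        omega
    obtain ⟨u, hu⟩ := hγ
    have c1 : 2 ≤ x+1 := by rcases hx with ⟨k, hk⟩; omega
    have c2 : 2*(x+1) ≤ n := by omega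
    have c3 : 3*(x+1) ≤ n + 2 := by omega
    have c4 : 2*u ≤ n := by omega
    obtain ⟨GG, M, h3, hM, hf⟩ := aux_del n (x+1) u hn0
      (Nat.even_add_one.mpr (Nat.not_even_iff_odd.mpr hx)) c1 c2 c3 c4
    refine ⟨GG, h3, ?_, ?_⟩
    · rw [counts_formula M _ (x+1-1) (x+1) (by omega) hf x, if_pos (by omega)]
      omega
    · rw [counts_formula M _ (x+1-1) (x+1) (by omega) hf (x+1), if_neg (by omega), if_pos rfl, hcard]
      omega

end TF

theorem exists_trianglefree_two_degrees' (a b α β : ℕ)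
    (hab : a = b + 1 ∨ b = a + 1)
    (heven : Even (α * a + β * b))
    (hsize : 3 * a + 3 * b + 1 < α + β) :
    ∃ G : SimpleGraph (Fin (α + β)),
      G.CliqueFree 3 ∧
      Nat.card {v : Fin (α + β) // nbrDeg G v = a} = α ∧
      Nat.card {v : Fin (α + β) // nbrDeg G v = b} = β := by
  haveI : NeZero (α + β) := ⟨by omega⟩
  haveI : NeZero (β + α) := ⟨by omega⟩
  rcases hab with hab | hab
  · subst hab
    obtain ⟨GG, h3, hb, ha⟩ := TF.master b β α (by rwa [Nat.add_comm]) (by omega)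
    obtain ⟨GV, h3', hcount⟩ := TF.transfer
      (Fintype.equivOfCardEq (by rw [Fintype.card_fin, ZMod.card]; omega) :
        Fin (α + β) ≃ ZMod (β + α)) GG h3
    exact ⟨GV, h3', by rw [hcount (b+1)]; exact ha, by rw [hcount b]; exact hb⟩
  · subst hab
    obtain ⟨GG, h3, ha, hb⟩ := TF.master a α β heven (by omega)
    obtain ⟨GV, h3', hcount⟩ := TF.transfer
      (Fintype.equivOfCardEq (by rw [Fintype.card_fin, ZMod.card]) :
        Fin (α + β) ≃ ZMod (α + β)) GG h3
    exact ⟨GV, h3', by rw [hcount a]; exact ha, by rw [hcount (a+1)]; exact hb⟩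

theorem exists_trianglefree_two_degrees (a b α β : ℕ)
    (hab : a = b + 1 ∨ b = a + 1)
    (heven : Even (α * a + β * b))
    (hsize : 3 * a + 3 * b + 1 < α + β) :
    ∃ G : SimpleGraph (Fin (α + β)),
      G.CliqueFree 3 ∧
      Nat.card {v : Fin (α + β) // nbrDeg G v = a} = α ∧
      Nat.card {v : Fin (α + β) // nbrDeg G v = b} = β := by
  exact exists_trianglefree_two_degrees' a b α β hab heven hsize
end

section
/- For all sufficiently large n and every q with q ≤ n²/20, there exists a graph H on n vertices with ⌊n²/4⌋ + 1 + q edges whose number of bowtie subgraphs is at most (q+1)²·(13n/4 + 13). Consequently h_F(n,q) ≤ (q+1)²(13n/4 + 13). -/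
open Finset

namespace BT

def mm (n : ℕ) : ℕ := n / 4
def hhf (n : ℕ) : ℕ := n / 2
def AA (n t : ℕ) : ℕ := t % mm n
def BB (n t : ℕ) : ℕ := mm n + (t % mm n + t / mm n) % mm n

def Jpred (n k : ℕ) (u v : Fin n) (t : ℕ) : Prop :=
  t < k ∧ ((u.val = AA n t ∧ v.val = BB n t) ∨ (v.val = AA n t ∧ u.val = BB n t))

instance (n k : ℕ) (u v : Fin n) : DecidablePred (Jpred n k u v) := fun _ =>
  inferInstanceAs (Decidable (_ ∧ _))

def Jrel (n k : ℕ) (u v : Fin n) : Prop := ∃ t, Jpred n k u v t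

instance (n k : ℕ) (u v : Fin n) : Decidable (Jrel n k u v) :=
  decidable_of_iff (∃ t ∈ range k, Jpred n k u v t)
    ⟨fun ⟨t, _, h⟩ => ⟨t, h⟩, fun ⟨t, h⟩ => ⟨t, mem_range.2 h.1, h⟩⟩

lemma Jrel.symm' {n k : ℕ} {u v : Fin n} (h : Jrel n k u v) : Jrel n k v u := by
  obtain ⟨t, ht, hc⟩ := h
  exact ⟨t, ht, hc.symm⟩

def HG (n k : ℕ) : SimpleGraph (Fin n) where
  Adj u v := (u.val < hhf n ∧ hhf n ≤ v.val) ∨ (v.val < hhf n ∧ hhf n ≤ u.val) ∨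
    (u ≠ v ∧ Jrel n k u v)
  symm := by
    constructor
    intro u v h
    rcases h with h | h | ⟨h1, h2⟩
    · exact Or.inr (Or.inl h)
    · exact Or.inl h
    · exact Or.inr (Or.inr ⟨h1.symm, h2.symm'⟩)
  loopless := by
    constructor
    intro v h
    rcases h with ⟨h1, h2⟩ | ⟨h1, h2⟩ | ⟨h1, _⟩
    · omega
    · omega
    · exact h1 rfl

instance (n k : ℕ) : DecidableRel (HG n k).Adj := fun _ _ =>
  inferInstanceAs (Decidable (_ ∨ _ ∨ _))

instance (n k : ℕ) (c a b d e : Fin n) : Decidable (IsBowtie (HG n k) c a b d e) :=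
  inferInstanceAs (Decidable (_ ∧ _ ∧ _ ∧ _ ∧ _ ∧ _ ∧ _ ∧ _ ∧ _ ∧ _))

lemma mm_pos {n : ℕ} (hn : 100 ≤ n) : 0 < mm n := by unfold mm; omega

lemma AA_lt {n : ℕ} (hn : 100 ≤ n) (t : ℕ) : AA n t < mm n := Nat.mod_lt _ (mm_pos hn)

lemma BB_ge {n : ℕ} (t : ℕ) : mm n ≤ BB n t := Nat.le_add_right _ _

lemma BB_lt {n : ℕ} (hn : 100 ≤ n) (t : ℕ) : BB n t < 2 * mm n := by
  have := Nat.mod_lt (t % mm n + t / mm n) (mm_pos hn)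
  unfold BB; omega

lemma two_mm_le_hhf {n : ℕ} : 2 * mm n ≤ hhf n := by
  show 2 * (n / 4) ≤ n / 2; omega

lemma hhf_le {n : ℕ} : hhf n ≤ n := by show n / 2 ≤ n; omega

lemma Jrel.sides {n k : ℕ} (hn : 100 ≤ n) {u v : Fin n} (h : Jrel n k u v) :
    (u.val < mm n ∧ mm n ≤ v.val ∧ v.val < 2 * mm n) ∨
      (v.val < mm n ∧ mm n ≤ u.val ∧ u.val < 2 * mm n) := by
  obtain ⟨t, _, hc⟩ := h
  have h1 := AA_lt hn t
  have h2 := BB_ge (n := n) t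
  have h3 := BB_lt hn t
  rcases hc with ⟨e1, e2⟩ | ⟨e1, e2⟩
  · left; omega
  · right; omega

lemma Jrel.ne {n k : ℕ} (hn : 100 ≤ n) {u v : Fin n} (h : Jrel n k u v) : u ≠ v := by
  intro he
  subst he
  rcases h.sides hn with ⟨h1, h2, _⟩ | ⟨h1, h2, _⟩ <;> omega

lemma Jrel.no_triangle {n k : ℕ} (hn : 100 ≤ n) {u v w : Fin n}
    (h1 : Jrel n k u v) (h2 : Jrel n k u w) (h3 : Jrel n k v w) : False := by
  rcases h1.sides hn with ⟨a1, a2, a3⟩ | ⟨a1, a2, a3⟩ <;>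
    rcases h2.sides hn with ⟨b1, b2, b3⟩ | ⟨b1, b2, b3⟩ <;>
      rcases h3.sides hn with ⟨c1, c2, c3⟩ | ⟨c1, c2, c3⟩ <;> omega

lemma adj_iff {n k : ℕ} {u v : Fin n} : (HG n k).Adj u v ↔
    ((u.val < hhf n ∧ hhf n ≤ v.val) ∨ (v.val < hhf n ∧ hhf n ≤ u.val) ∨
      (u ≠ v ∧ Jrel n k u v)) := Iff.rfl

lemma adj_inside {n k : ℕ} (hn : 100 ≤ n) {u v : Fin n} (h : (HG n k).Adj u v)
    (h1 : u.val < hhf n) (h2 : v.val < hhf n) : Jrel n k u v := by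
  rcases adj_iff.1 h with ⟨a1, a2⟩ | ⟨a1, a2⟩ | ⟨_, hj⟩
  · omega
  · omega
  · exact hj

lemma adj_big {n k : ℕ} (hn : 100 ≤ n) {u v : Fin n} (h : (HG n k).Adj u v)
    (h1 : hhf n ≤ u.val) : v.val < hhf n := by
  have h2m := two_mm_le_hhf (n := n)
  rcases adj_iff.1 h with ⟨a1, a2⟩ | ⟨a1, a2⟩ | ⟨_, hj⟩
  · omega
  · exact a1
  · rcases hj.sides hn with ⟨b1, b2, b3⟩ | ⟨b1, b2, b3⟩ <;> omega

lemma tri_pick {n k : ℕ} (hn : 100 ≤ n) {c a b : Fin n} (h1 : (HG n k).Adj c a)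
    (h2 : (HG n k).Adj c b) (h3 : (HG n k).Adj a b) (hc : c.val < hhf n) :
    Jrel n k c (if a.val < hhf n then a else b) ∧
      hhf n ≤ (if a.val < hhf n then b else a).val := by
  by_cases ha : a.val < hhf n
  · rw [if_pos ha, if_pos ha]
    have hb : hhf n ≤ b.val := by
      by_contra hb
      push_neg at hb
      exact Jrel.no_triangle hn (adj_inside hn h1 hc ha) (adj_inside hn h2 hc hb)
        (adj_inside hn h3 ha hb)
    exact ⟨adj_inside hn h1 hc ha, hb⟩
  · push_neg at ha
    rw [if_neg (not_lt.2 ha), if_neg (not_lt.2 ha)]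
    have hb : b.val < hhf n := adj_big hn h3 ha
    exact ⟨adj_inside hn h2 hc hb, ha⟩

lemma eq_of_div_mod {x y m : ℕ} (h1 : x / m = y / m) (h2 : x % m = y % m) : x = y := by
  calc x = m * (x / m) + x % m := (Nat.div_add_mod x m).symm
    _ = m * (y / m) + y % m := by rw [h1, h2]
    _ = y := Nat.div_add_mod y m

lemma mod_cancel_right {a b s m : ℕ} (ha : a < m) (hb : b < m)
    (h : (a + s) % m = (b + s) % m) : a = b := by
  have h' : a ≡ b [MOD m] := Nat.ModEq.add_right_cancel' s h
  have h2 : a % m = b % m := h'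
  rwa [Nat.mod_eq_of_lt ha, Nat.mod_eq_of_lt hb] at h2

lemma t_inj {n k : ℕ} (hn : 100 ≤ n) (hkm : k ≤ mm n * mm n) {t₁ t₂ : ℕ}
    (h1 : t₁ < k) (h2 : t₂ < k) (hA : AA n t₁ = AA n t₂) (hB : BB n t₁ = BB n t₂) :
    t₁ = t₂ := by
  have hd1 : t₁ / mm n < mm n := Nat.div_lt_of_lt_mul (lt_of_lt_of_le h1 hkm)
  have hd2 : t₂ / mm n < mm n := Nat.div_lt_of_lt_mul (lt_of_lt_of_le h2 hkm)
  have hA' : t₁ % mm n = t₂ % mm n := hA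
  unfold BB at hB
  have hB' : (t₁ % mm n + t₁ / mm n) % mm n = (t₂ % mm n + t₂ / mm n) % mm n := by omega
  rw [hA'] at hB'
  have hdd : t₁ / mm n = t₂ / mm n := by
    have h' : t₁ / mm n ≡ t₂ / mm n [MOD mm n] := Nat.ModEq.add_left_cancel' _ hB'
    have h'' : t₁ / mm n % mm n = t₂ / mm n % mm n := h'
    rwa [Nat.mod_eq_of_lt hd1, Nat.mod_eq_of_lt hd2] at h''
  exact eq_of_div_mod hdd hA'

section withNeZero
variable (n k : ℕ) [NeZero n]

def fA (t : ℕ) : Fin n := ⟨AA n t % n, Nat.mod_lt _ (Nat.pos_of_ne_zero (NeZero.ne n))⟩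
def fB (t : ℕ) : Fin n := ⟨BB n t % n, Nat.mod_lt _ (Nat.pos_of_ne_zero (NeZero.ne n))⟩

def eJ : Finset (Sym2 (Fin n)) := (range k).image fun t => s(fA n t, fB n t)

def jPairsF : Finset (Fin n × Fin n) :=
  ((range k).image fun t => (fA n t, fB n t)) ∪ ((range k).image fun t => (fB n t, fA n t))

def V1F : Finset (Fin n) := univ.filter fun v => v.val < hhf n
def V2F : Finset (Fin n) := univ.filter fun v => hhf n ≤ v.val

def TupS : Finset (Fin n × Fin n × Fin n × Fin n × Fin n) :=
  univ.filter fun t => IsBowtie (HG n k) t.1 t.2.1 t.2.2.1 t.2.2.2.1 t.2.2.2.2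

def pairsShare : Finset (ℕ × ℕ) :=
  ((range k) ×ˢ (range k)).filter fun p => p.1 ≠ p.2 ∧ (AA n p.1 = AA n p.2 ∨ BB n p.1 = BB n p.2)

end withNeZero

lemma fA_val {n : ℕ} [NeZero n] (hn : 100 ≤ n) (t : ℕ) : (fA n t).val = AA n t := by
  have h1 := AA_lt hn t
  have h2 : mm n ≤ n := by unfold mm; omega
  exact Nat.mod_eq_of_lt (by omega)

lemma fB_val {n : ℕ} [NeZero n] (hn : 100 ≤ n) (t : ℕ) : (fB n t).val = BB n t := by
  have h1 := BB_lt hn t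
  have h2 : 2 * mm n ≤ n := by unfold mm; omega
  exact Nat.mod_eq_of_lt (by omega)

lemma jrel_mem_pairs {n k : ℕ} [NeZero n] (hn : 100 ≤ n) {u v : Fin n}
    (h : Jrel n k u v) : (u, v) ∈ jPairsF n k := by
  obtain ⟨t, ht, hc⟩ := h
  rcases hc with ⟨e1, e2⟩ | ⟨e1, e2⟩
  · refine mem_union_left _ (mem_image.2 ⟨t, mem_range.2 ht, ?_⟩)
    exact Prod.ext (Fin.ext (by rw [fA_val hn, ← e1])) (Fin.ext (by rw [fB_val hn, ← e2]))
  · refine mem_union_right _ (mem_image.2 ⟨t, mem_range.2 ht, ?_⟩)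
    exact Prod.ext (Fin.ext (by rw [fB_val hn, ← e2])) (Fin.ext (by rw [fA_val hn, ← e1]))

lemma card_jPairsF {n k : ℕ} [NeZero n] : (jPairsF n k).card ≤ 2 * k := by
  refine le_trans (card_union_le _ _) ?_
  have h1 := card_image_le (s := range k) (f := fun t => (fA n t, fB n t))
  have h2 := card_image_le (s := range k) (f := fun t => (fB n t, fA n t))
  simp only [card_range] at h1 h2
  omega

lemma card_V1F {n : ℕ} : (V1F n).card = hhf n := by
  have hle : hhf n ≤ n := hhf_le
  have : V1F n = (range (hhf n)).attachFin
      (fun m hm => lt_of_lt_of_le (mem_range.1 hm) hle) := by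
    ext v
    simp [V1F, Finset.mem_attachFin, mem_range]
  rw [this, Finset.card_attachFin, card_range]

lemma card_V2F {n : ℕ} : (V2F n).card = n - hhf n := by
  have : V2F n = (Ico (hhf n) n).attachFin (fun m hm => (mem_Ico.1 hm).2) := by
    ext v
    simp [V2F, Finset.mem_attachFin, mem_Ico, v.is_lt]
  rw [this, Finset.card_attachFin, Nat.card_Ico]

lemma quarter (n : ℕ) : hhf n * (n - hhf n) = n ^ 2 / 4 := by
  show n / 2 * (n - n / 2) = n ^ 2 / 4
  obtain ⟨t, rfl | rfl⟩ := Nat.even_or_odd' n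
  · have h1 : 2 * t / 2 = t := by omega
    rw [h1, show 2 * t - t = t by omega, show (2 * t) ^ 2 = 4 * (t * t) + 0 by ring,
      Nat.mul_add_div (by norm_num)]
    simp
  · have h1 : (2 * t + 1) / 2 = t := by omega
    rw [h1, show 2 * t + 1 - t = t + 1 by omega,
      show (2 * t + 1) ^ 2 = 4 * (t * t + t) + 1 by ring, Nat.mul_add_div (by norm_num)]
    ring_nf

lemma card_eJ {n k : ℕ} [NeZero n] (hn : 100 ≤ n) (hkm : k ≤ mm n * mm n) :
    (eJ n k).card = k := by
  rw [eJ, Finset.card_image_of_injOn, card_range]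
  intro t1 h1 t2 h2 heq
  rw [mem_coe, mem_range] at h1 h2
  have hAB1 : (fA n t1).val < mm n := by rw [fA_val hn]; exact AA_lt hn t1
  have hAB2 : (fA n t2).val < mm n := by rw [fA_val hn]; exact AA_lt hn t2
  have hB1 : mm n ≤ (fB n t1).val := by rw [fB_val hn]; exact BB_ge t1
  have hB2 : mm n ≤ (fB n t2).val := by rw [fB_val hn]; exact BB_ge t2
  rcases Sym2.eq_iff.1 heq with ⟨e1, e2⟩ | ⟨e1, e2⟩
  · refine t_inj hn hkm h1 h2 ?_ ?_
    · rw [← fA_val hn t1, ← fA_val hn t2, e1]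
    · rw [← fB_val hn t1, ← fB_val hn t2, e2]
  · exfalso
    have := congrArg Fin.val e1
    omega

lemma edge_count {n k : ℕ} [NeZero n] (hn : 100 ≤ n) (hkm : k ≤ mm n * mm n) :
    edgeCount (HG n k) = n ^ 2 / 4 + k := by
  classical
  have h0 : edgeCount (HG n k) = (HG n k).edgeFinset.card := by
    rw [edgeCount, Nat.card_eq_fintype_card, SimpleGraph.edgeFinset_card]
  rw [h0]
  have h2m : 2 * mm n ≤ hhf n := two_mm_le_hhf
  have hsplit := Finset.card_filter_add_card_filter_not
    (s := (HG n k).edgeFinset) (p := fun e => ∀ x ∈ e, x.val < hhf n)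
  have hJ : (HG n k).edgeFinset.filter (fun e => ∀ x ∈ e, x.val < hhf n) = eJ n k := by
    ext e
    induction e using Sym2.ind with
    | _ u v =>
      simp only [mem_filter, SimpleGraph.mem_edgeFinset, SimpleGraph.mem_edgeSet,
        eJ, mem_image, mem_range]
      constructor
      · rintro ⟨hadj, hall⟩
        have hu := hall u (by rw [Sym2.mem_iff]; left; rfl)
        have hv := hall v (by rw [Sym2.mem_iff]; right; rfl)
        obtain ⟨t, ht, hc⟩ := adj_inside hn hadj hu hv
        refine ⟨t, ht, ?_⟩
        rcases hc with ⟨e1, e2⟩ | ⟨e1, e2⟩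
        · rw [show fA n t = u from Fin.ext (by rw [fA_val hn, ← e1]),
            show fB n t = v from Fin.ext (by rw [fB_val hn, ← e2])]
        · rw [show fA n t = v from Fin.ext (by rw [fA_val hn, ← e1]),
            show fB n t = u from Fin.ext (by rw [fB_val hn, ← e2])]
          exact Sym2.eq_swap
      · rintro ⟨t, ht, he⟩
        have hA := AA_lt hn t
        have hB1 := BB_ge (n := n) t
        have hB2 := BB_lt hn t
        have hvA := fA_val (n := n) hn t
        have hvB := fB_val (n := n) hn t
        have hadj : (HG n k).Adj (fA n t) (fB n t) := by
          refine adj_iff.2 (Or.inr (Or.inr ⟨?_, ⟨t, ht, Or.inl ⟨hvA, hvB⟩⟩⟩))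
          intro hfe
          have := congrArg Fin.val hfe
          omega
        constructor
        · exact (SimpleGraph.mem_edgeSet _).1 (he ▸ (SimpleGraph.mem_edgeSet _).2 hadj)
        · intro x hx
          rw [← he, Sym2.mem_iff] at hx
          rcases hx with rfl | rfl <;> omega
  have hC : (HG n k).edgeFinset.filter (fun e => ¬ ∀ x ∈ e, x.val < hhf n)
      = (V1F n ×ˢ V2F n).image (fun p => s(p.1, p.2)) := by
    ext e
    induction e using Sym2.ind with
    | _ u v =>
      simp only [mem_filter, SimpleGraph.mem_edgeFinset, SimpleGraph.mem_edgeSet,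
        mem_image, mem_product, V1F, V2F, mem_univ, true_and, Prod.exists]
      constructor
      · rintro ⟨hadj, hnall⟩
        push_neg at hnall
        obtain ⟨x, hx, hxb⟩ := hnall
        rw [Sym2.mem_iff] at hx
        rcases hx with rfl | rfl
        · have hv : v.val < hhf n := adj_big hn hadj (by omega)
          exact ⟨v, x, ⟨hv, by omega⟩, Sym2.eq_swap⟩
        · have hu : u.val < hhf n := adj_big hn (hadj.symm) (by omega)
          exact ⟨u, x, ⟨hu, by omega⟩, rfl⟩
      · rintro ⟨p1, p2, ⟨hp1, hp2⟩, he⟩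
        have hadj : (HG n k).Adj p1 p2 := adj_iff.2 (Or.inl ⟨hp1, hp2⟩)
        constructor
        · exact (SimpleGraph.mem_edgeSet _).1 (he ▸ (SimpleGraph.mem_edgeSet _).2 hadj)
        · intro hall
          have := hall p2 (by rw [← he, Sym2.mem_iff]; right; rfl)
          omega
  have hCcard : ((V1F n ×ˢ V2F n).image (fun p : Fin n × Fin n => s(p.1, p.2))).card
      = hhf n * (n - hhf n) := by
    rw [Finset.card_image_of_injOn, card_product, card_V1F, card_V2F]
    rintro ⟨a1, a2⟩ h1 ⟨b1, b2⟩ h2 heq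
    simp only [coe_product, Set.mem_prod, mem_coe, V1F, V2F, mem_filter, mem_univ,
      true_and] at h1 h2
    dsimp only at heq
    rcases Sym2.eq_iff.1 heq with ⟨e1, e2⟩ | ⟨e1, e2⟩
    · exact Prod.ext e1 e2
    · exfalso
      have := congrArg Fin.val e1
      omega
  rw [hJ, hC, card_eJ hn hkm, hCcard, quarter] at hsplit
  omega

noncomputable def tOf (n k : ℕ) (u v : Fin n) : ℕ :=
  if h : Jrel n k u v then Nat.find h else 0

lemma tOf_spec {n k : ℕ} {u v : Fin n} (h : Jrel n k u v) :
    Jpred n k u v (tOf n k u v) := by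
  rw [tOf, dif_pos h]
  exact Nat.find_spec h

lemma tOf_edge_eq {n k : ℕ} (hn : 100 ≤ n) {c x c' x' : Fin n}
    (h : Jrel n k c x) (h' : Jrel n k c' x') (ht : tOf n k c x = tOf n k c' x') :
    (c = c' ∧ x = x') ∨ (c = x' ∧ x = c') := by
  obtain ⟨-, hs⟩ := tOf_spec h
  obtain ⟨-, hs'⟩ := tOf_spec h'
  rw [ht] at hs
  set t := tOf n k c' x' with htd
  rcases hs with ⟨e1, e2⟩ | ⟨e1, e2⟩ <;> rcases hs' with ⟨f1, f2⟩ | ⟨f1, f2⟩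
  · exact Or.inl ⟨Fin.ext (e1.trans f1.symm), Fin.ext (e2.trans f2.symm)⟩
  · exact Or.inr ⟨Fin.ext (e1.trans f1.symm), Fin.ext (e2.trans f2.symm)⟩
  · exact Or.inr ⟨Fin.ext (e2.trans f2.symm), Fin.ext (e1.trans f1.symm)⟩
  · exact Or.inl ⟨Fin.ext (e2.trans f2.symm), Fin.ext (e1.trans f1.symm)⟩

lemma ite_sub_lt {dx dy c : ℕ} (hne : dx ≠ dy) (h2 : dx ≤ c) (h3 : dy ≤ c) :
    (if dy < dx then dy else dy - 1) < c := by
  split_ifs <;> omega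

lemma ite_sub_inj {dx dy dy' : ℕ} (hne : dx ≠ dy) (hne' : dx ≠ dy')
    (h : (if dy < dx then dy else dy - 1) = (if dy' < dx then dy' else dy' - 1)) :
    dy = dy' := by
  split_ifs at h <;> omega

lemma card_pairsShare {n k : ℕ} (hn : 100 ≤ n) (hk : 1 ≤ k) :
    (pairsShare n k).card ≤ k * (2 * ((k - 1) / mm n)) := by
  classical
  have hm0 : 0 < mm n := mm_pos hn
  have key : ∀ x y : ℕ, x < k → y < k → x ≠ y →
      (AA n x = AA n y ∨ BB n x = BB n y) → x / mm n ≠ y / mm n := by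
    intro x y hx hy hne hcol hdiv
    rcases hcol with hA | hB
    · exact hne (eq_of_div_mod hdiv hA)
    · unfold BB at hB
      have hB' : (x % mm n + x / mm n) % mm n = (y % mm n + y / mm n) % mm n := by omega
      rw [hdiv] at hB'
      have hxy : x % mm n = y % mm n :=
        mod_cancel_right (Nat.mod_lt _ hm0) (Nat.mod_lt _ hm0) hB'
      exact hne (eq_of_div_mod hdiv hxy)
  refine le_trans (Finset.card_le_card_of_injOn
    (t := range k ×ˢ ((univ : Finset Bool) ×ˢ range ((k - 1) / mm n)))
    (fun p : ℕ × ℕ => (p.1, (decide (AA n p.1 = AA n p.2),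
      if p.2 / mm n < p.1 / mm n then p.2 / mm n else p.2 / mm n - 1)))
    ?_ ?_) (le_of_eq (by simp [card_product]))
  · rintro ⟨x, y⟩ hp
    simp only [mem_coe, pairsShare, mem_filter, mem_product, mem_range] at hp
    obtain ⟨⟨hx, hy⟩, hne, hcol⟩ := hp
    have hd := key x y hx hy hne hcol
    have hxc : x / mm n ≤ (k - 1) / mm n := Nat.div_le_div_right (by omega)
    have hyc : y / mm n ≤ (k - 1) / mm n := Nat.div_le_div_right (by omega)
    rw [mem_coe]
    refine mem_product.2 ⟨mem_range.2 hx, mem_product.2 ⟨mem_univ _, mem_range.2 ?_⟩⟩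
    exact ite_sub_lt hd hxc hyc
  · rintro ⟨x, y⟩ hp ⟨x', y'⟩ hp' heq
    simp only [mem_coe, pairsShare, mem_filter, mem_product, mem_range] at hp hp'
    obtain ⟨⟨hx, hy⟩, hne, hcol⟩ := hp
    obtain ⟨⟨hx', hy'⟩, hne', hcol'⟩ := hp'
    obtain ⟨h1, h2, h3⟩ : x = x' ∧ decide (AA n x = AA n y) = decide (AA n x' = AA n y') ∧
        (if y / mm n < x / mm n then y / mm n else y / mm n - 1)
          = (if y' / mm n < x' / mm n then y' / mm n else y' / mm n - 1) := by
      simpa [Prod.ext_iff] using heq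
    subst h1
    have hd := key x y hx hy hne hcol
    have hd' := key x y' hx hy' hne' hcol'
    have hdiv : y / mm n = y' / mm n := ite_sub_inj hd hd' h3
    have hmod : y % mm n = y' % mm n := by
      by_cases hA : AA n x = AA n y
      · have hA' : AA n x = AA n y' :=
          of_decide_eq_true (by rw [← h2]; exact decide_eq_true hA)
        unfold AA at hA hA'
        omega
      · have hQ : ¬ AA n x = AA n y' := fun hA' =>
          hA (of_decide_eq_true (by rw [h2]; exact decide_eq_true hA'))
        have hBB : BB n x = BB n y := hcol.resolve_left hA
        have hBB' : BB n x = BB n y' := hcol'.resolve_left hQ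
        unfold BB at hBB hBB'
        have e1 : (y % mm n + y / mm n) % mm n = (x % mm n + x / mm n) % mm n := by omega
        have e2 : (y' % mm n + y' / mm n) % mm n = (x % mm n + x / mm n) % mm n := by omega
        rw [hdiv] at e1
        exact mod_cancel_right (Nat.mod_lt _ hm0) (Nat.mod_lt _ hm0) (e1.trans e2.symm)
    exact Prod.ext rfl (eq_of_div_mod hdiv hmod)

lemma bowtie_card (n k : ℕ) : bowtieCount (HG n k) = (TupS n k).card / 8 := by
  unfold bowtieCount TupS
  congr 1
  rw [Nat.card_eq_fintype_card]
  exact Fintype.card_subtype _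

lemma tup_card_le {n k : ℕ} [NeZero n] (hn : 100 ≤ n) (hk : 1 ≤ k)
    (hkm : k ≤ mm n * mm n) : (TupS n k).card ≤ k * k * (26 * n + 104) := by
  classical
  have hm0 : 0 < mm n := mm_pos hn
  have hsplit := Finset.card_filter_add_card_filter_not
    (s := TupS n k) (p := fun t => t.1.val < hhf n)
  set S1 := (TupS n k).filter (fun t => t.1.val < hhf n) with hS1d
  set S2 := (TupS n k).filter (fun t => ¬ t.1.val < hhf n) with hS2d
  -- S2 bound
  have hS2 : S2.card ≤ (n - hhf n) * ((2 * k) * (2 * k)) := by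
    refine le_trans (Finset.card_le_card_of_injOn
      (t := V2F n ×ˢ (jPairsF n k ×ˢ jPairsF n k))
      (fun t => (t.1, ((t.2.1, t.2.2.1), (t.2.2.2.1, t.2.2.2.2)))) ?_ ?_) ?_
    · rintro ⟨c, a, b, d, e⟩ ht
      simp only [mem_coe, hS2d, TupS, mem_filter, mem_univ, true_and] at ht
      obtain ⟨⟨h1, h2, h3, h4, h5, h6, -, -, -, -⟩, hc⟩ := ht
      push_neg at hc
      have ha := adj_big hn h1 hc
      have hb := adj_big hn h2 hc
      have hd := adj_big hn h4 hc
      have he := adj_big hn h5 hc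
      rw [mem_coe]
      refine mem_product.2 ⟨?_, mem_product.2 ⟨?_, ?_⟩⟩
      · simp only [V2F, mem_filter, mem_univ, true_and]; exact hc
      · exact jrel_mem_pairs hn (adj_inside hn h3 ha hb)
      · exact jrel_mem_pairs hn (adj_inside hn h6 hd he)
    · rintro ⟨c, a, b, d, e⟩ - ⟨c', a', b', d', e'⟩ - heq
      simp only [Prod.mk.injEq] at heq
      obtain ⟨e1, ⟨e2, e3⟩, e4, e5⟩ := heq
      simp only [Prod.mk.injEq]
      exact ⟨e1, e2, e3, e4, e5⟩
    · rw [card_product, card_product, card_V2F]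
      have hJP := card_jPairsF (n := n) (k := k)
      exact Nat.mul_le_mul_left _ (Nat.mul_le_mul hJP hJP)
  -- S1 bound
  have hS1 : S1.card ≤ (pairsShare n k).card * ((n - hhf n) * ((n - hhf n) * 4)) := by
    refine le_trans (Finset.card_le_card_of_injOn
      (t := pairsShare n k ×ˢ (V2F n ×ˢ (V2F n ×ˢ (univ : Finset (Bool × Bool)))))
      (fun t => ((tOf n k t.1 (if t.2.1.val < hhf n then t.2.1 else t.2.2.1),
           tOf n k t.1 (if t.2.2.2.1.val < hhf n then t.2.2.2.1 else t.2.2.2.2)),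
          ((if t.2.1.val < hhf n then t.2.2.1 else t.2.1),
           ((if t.2.2.2.1.val < hhf n then t.2.2.2.2 else t.2.2.2.1),
            (decide (t.2.1.val < hhf n), decide (t.2.2.2.1.val < hhf n)))))) ?_ ?_) ?_
    · rintro ⟨c, a, b, d, e⟩ ht
      simp only [mem_coe, hS1d, TupS, mem_filter, mem_univ, true_and] at ht
      obtain ⟨⟨h1, h2, h3, h4, h5, h6, h7, h8, h9, h10⟩, hc⟩ := ht
      have p1 := tri_pick hn h1 h2 h3 hc
      have p2 := tri_pick hn h4 h5 h6 hc
      have hx12 : (if a.val < hhf n then a else b) ≠ (if d.val < hhf n then d else e) := by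
        split_ifs <;> assumption
      obtain ⟨s1k, s1e⟩ := tOf_spec p1.1
      obtain ⟨s2k, s2e⟩ := tOf_spec p2.1
      dsimp only
      rw [mem_coe]
      refine mem_product.2 ⟨?_, mem_product.2 ⟨?_, mem_product.2 ⟨?_, mem_univ _⟩⟩⟩
      · simp only [pairsShare, mem_filter, mem_product, mem_range]
        refine ⟨⟨s1k, s2k⟩, ?_, ?_⟩
        · intro hteq
          rcases tOf_edge_eq hn p1.1 p2.1 hteq with ⟨-, hxx⟩ | ⟨hcx, -⟩
          · exact hx12 hxx
          · exact Jrel.ne hn p2.1 hcx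
        · have hA1 := AA_lt hn (tOf n k c (if a.val < hhf n then a else b))
          have hA2 := AA_lt hn (tOf n k c (if d.val < hhf n then d else e))
          have hB1 := BB_ge (n := n) (tOf n k c (if a.val < hhf n then a else b))
          have hB2 := BB_ge (n := n) (tOf n k c (if d.val < hhf n then d else e))
          rcases s1e with ⟨u1, -⟩ | ⟨-, u1⟩ <;> rcases s2e with ⟨u2, -⟩ | ⟨-, u2⟩
          · left; omega
          · exfalso; omega
          · exfalso; omega
          · right; omega
      · simp only [V2F, mem_filter, mem_univ, true_and]; exact p1.2
      · simp only [V2F, mem_filter, mem_univ, true_and]; exact p2.2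
    · rintro ⟨c, a, b, d, e⟩ ht ⟨c', a', b', d', e'⟩ ht' heq
      simp only [mem_coe, hS1d, TupS, mem_filter, mem_univ, true_and] at ht ht'
      obtain ⟨⟨h1, h2, h3, h4, h5, h6, h7, h8, h9, h10⟩, hc⟩ := ht
      obtain ⟨⟨h1', h2', h3', h4', h5', h6', h7', h8', h9', h10'⟩, hc'⟩ := ht'
      have p1 := tri_pick hn h1 h2 h3 hc
      have p2 := tri_pick hn h4 h5 h6 hc
      have p1' := tri_pick hn h1' h2' h3' hc'
      have p2' := tri_pick hn h4' h5' h6' hc'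
      have hx12' : (if a'.val < hhf n then a' else b') ≠ (if d'.val < hhf n then d' else e') := by
        split_ifs <;> assumption
      simp only [Prod.mk.injEq] at heq
      obtain ⟨⟨ht1, ht2⟩, hw1, hw2, hb1, hb2⟩ := heq
      rcases tOf_edge_eq hn p1.1 p1'.1 ht1 with ⟨hcc, hx1⟩ | ⟨hcx, hxc⟩ <;>
        rcases tOf_edge_eq hn p2.1 p2'.1 ht2 with ⟨hcc2, hx2⟩ | ⟨hcx2, hxc2⟩
      · have hiff1 : (a.val < hhf n ↔ a'.val < hhf n) := decide_eq_decide.1 hb1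
        have hiff2 : (d.val < hhf n ↔ d'.val < hhf n) := decide_eq_decide.1 hb2
        simp only [Prod.mk.injEq]
        refine ⟨hcc, ?_⟩
        by_cases hA : a.val < hhf n
        · have hA' : a'.val < hhf n := hiff1.1 hA
          rw [if_pos hA, if_pos hA'] at hx1 hw1
          by_cases hD : d.val < hhf n
          · have hD' : d'.val < hhf n := hiff2.1 hD
            rw [if_pos hD, if_pos hD'] at hx2 hw2
            exact ⟨hx1, hw1, hx2, hw2⟩
          · have hD' : ¬ d'.val < hhf n := fun h => hD (hiff2.2 h)
            rw [if_neg hD, if_neg hD'] at hx2 hw2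
            exact ⟨hx1, hw1, hw2, hx2⟩
        · have hA' : ¬ a'.val < hhf n := fun h => hA (hiff1.2 h)
          rw [if_neg hA, if_neg hA'] at hx1 hw1
          by_cases hD : d.val < hhf n
          · have hD' : d'.val < hhf n := hiff2.1 hD
            rw [if_pos hD, if_pos hD'] at hx2 hw2
            exact ⟨hw1, hx1, hx2, hw2⟩
          · have hD' : ¬ d'.val < hhf n := fun h => hD (hiff2.2 h)
            rw [if_neg hD, if_neg hD'] at hx2 hw2
            exact ⟨hw1, hx1, hw2, hx2⟩
      · exact absurd (hcc.symm.trans hcx2) (Jrel.ne hn p2'.1)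
      · exact absurd (hcc2.symm.trans hcx) (Jrel.ne hn p1'.1)
      · exact absurd (hcx.symm.trans hcx2) hx12'
    · have h4 : (univ : Finset (Bool × Bool)).card = 4 := by
        rw [card_univ]; simp
      refine le_of_eq ?_
      rw [card_product, card_product, card_product, card_V2F, h4]
  -- arithmetic
  have hP := card_pairsShare (n := n) (k := k) hn hk
  have hcm : ((k - 1) / mm n) * mm n ≤ k - 1 := Nat.div_mul_le_self _ _
  have hX1 : 2 * (n - hhf n) ≤ n + 1 := by
    have e1 : hhf n = n / 2 := rfl
    omega
  have hm4 : n ≤ 4 * mm n + 3 ∧ 4 * mm n ≤ n := by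
    have e2 : mm n = n / 4 := rfl
    omega
  set X := n - hhf n with hXd
  set cap := (k - 1) / mm n with hcapd
  set m := mm n with hmd
  have h8 : 8 * (X * X) ≤ 24 * (n * m) := by
    have hs : (2 * X) * (2 * X) ≤ (n + 1) * (n + 1) := Nat.mul_le_mul hX1 hX1
    have h100 : 100 * n ≤ n * n := Nat.mul_le_mul_right n hn
    have h57 : 24 * (n * n) ≤ 24 * (n * (4 * m + 3)) :=
      Nat.mul_le_mul_left _ (Nat.mul_le_mul_left _ hm4.1)
    nlinarith [hs, h100, h57]
  have h4X : 4 * X ≤ 2 * n + 2 := by omega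
  have hfinal : (S1.card + S2.card) * m ≤ (k * k * (26 * n + 104)) * m := by
    have c1 : S1.card ≤ (k * (2 * cap)) * (X * (X * 4)) :=
      le_trans hS1 (Nat.mul_le_mul_right _ hP)
    have c2 : S2.card ≤ X * ((2 * k) * (2 * k)) := hS2
    have hcmk : cap * m ≤ k := le_trans hcm (Nat.sub_le _ _)
    calc (S1.card + S2.card) * m
        ≤ ((k * (2 * cap)) * (X * (X * 4)) + X * ((2 * k) * (2 * k))) * m := by
          exact Nat.mul_le_mul_right _ (Nat.add_le_add c1 c2)
      _ = (k * (X * X)) * (8 * (cap * m)) + (k * k) * (4 * (X * m)) := by ring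
      _ ≤ (k * (X * X)) * (8 * k) + (k * k) * (4 * (X * m)) := by
          exact Nat.add_le_add_right (Nat.mul_le_mul_left _ (Nat.mul_le_mul_left _ hcmk)) _
      _ = (k * k) * (8 * (X * X)) + (k * k) * ((4 * X) * m) := by ring
      _ ≤ (k * k) * (24 * (n * m)) + (k * k) * ((2 * n + 2) * m) := by
          exact Nat.add_le_add (Nat.mul_le_mul_left _ h8)
            (Nat.mul_le_mul_left _ (Nat.mul_le_mul_right _ h4X))
      _ = (k * k) * ((26 * n + 2) * m) := by ring
      _ ≤ (k * k * (26 * n + 104)) * m := by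
          have h26 : (26 * n + 2) * m ≤ (26 * n + 104) * m :=
            Nat.mul_le_mul_right _ (by omega)
          calc (k * k) * ((26 * n + 2) * m) ≤ (k * k) * ((26 * n + 104) * m) :=
                Nat.mul_le_mul_left _ h26
            _ = (k * k * (26 * n + 104)) * m := by ring
  have := Nat.le_of_mul_le_mul_right (le_trans (le_of_eq (by rw [hsplit])) hfinal) hm0
  exact this

lemma k_le {n q : ℕ} (hn : 100 ≤ n) (hq : 20 * q ≤ n ^ 2) : q + 1 ≤ mm n * mm n := by
  have e2 : mm n = n / 4 := rfl
  have h1 : n ≤ 4 * mm n + 3 := by omega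
  have h2 : 25 ≤ mm n := by omega
  have h3 : n * n ≤ (4 * mm n + 3) * (4 * mm n + 3) := Nat.mul_le_mul h1 h1
  have h4 : n ^ 2 = n * n := sq n
  have h5 : 26 * mm n ≤ (4 * mm n) * mm n :=
    Nat.mul_le_mul_right _ (by omega)
  have h6 : 20 * (q + 1) ≤ 20 * (mm n * mm n) := by nlinarith [h3, h5, h2]
  exact Nat.le_of_mul_le_mul_left h6 (by norm_num)

lemma main_graph {n q : ℕ} (hn : 100 ≤ n) (hq : 20 * q ≤ n ^ 2) :
    edgeCount (HG n (q + 1)) = n ^ 2 / 4 + 1 + q ∧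
      (bowtieCount (HG n (q + 1)) : ℚ) ≤ (q + 1) ^ 2 * (13 * n / 4 + 13) := by
  haveI : NeZero n := ⟨by omega⟩
  have hkm := k_le hn hq
  constructor
  · rw [edge_count hn hkm]; omega
  · have hb := tup_card_le (n := n) (k := q + 1) hn (by omega) hkm
    rw [bowtie_card]
    calc ((TupS n (q + 1)).card / 8 : ℕ) ≤ (((TupS n (q + 1)).card : ℚ)) / 8 :=
          Nat.cast_div_le
      _ ≤ (((q + 1) * (q + 1) * (26 * n + 104) : ℕ) : ℚ) / 8 := by
          have : ((TupS n (q + 1)).card : ℚ) ≤ (((q + 1) * (q + 1) * (26 * n + 104) : ℕ) : ℚ) :=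
            Nat.cast_le.2 hb
          linarith
      _ = (q + 1) ^ 2 * (13 * n / 4 + 13) := by push_cast; ring

end BT

theorem upper_bound_hF :
    ∃ N : ℕ, ∀ n : ℕ, N ≤ n → ∀ q : ℕ, (q : ℚ) ≤ n ^ 2 / 20 →
      (∃ H : SimpleGraph (Fin n), edgeCount H = n ^ 2 / 4 + 1 + q ∧
        (bowtieCount H : ℚ) ≤ (q + 1) ^ 2 * (13 * n / 4 + 13)) ∧
      (hF n q : ℚ) ≤ (q + 1) ^ 2 * (13 * n / 4 + 13) := by
  refine ⟨100, fun n hn q hq => ?_⟩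
  have hq' : 20 * q ≤ n ^ 2 := by
    have h1 : (20 * q : ℚ) ≤ (n : ℚ) ^ 2 := by linarith
    exact_mod_cast h1
  obtain ⟨hE, hB⟩ := BT.main_graph hn hq'
  refine ⟨⟨BT.HG n (q + 1), hE, hB⟩, ?_⟩
  have hmem : bowtieCount (BT.HG n (q + 1)) ∈
      {k | ∃ G : SimpleGraph (Fin n), edgeCount G = n ^ 2 / 4 + 1 + q ∧ bowtieCount G = k} :=
    ⟨BT.HG n (q + 1), hE, rfl⟩
  have hle : hF n q ≤ bowtieCount (BT.HG n (q + 1)) := Nat.sInf_le hmem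
  exact le_trans (by exact_mod_cast Nat.cast_le.2 hle) hB
end

section
/- Let G be a graph with vertex set partitioned into V₁ and V₂ such that all edges between V₁ and V₂ are present. If e₁ and e₂ are two edges inside V₁ sharing exactly one vertex, then the number of bowtie subgraphs of G containing both e₁ and e₂ is at least |V₂|·(|V₂|−1). -/
open Finset

theorem bowties_through_adjacent_pair {V : Type*} [Fintype V] [DecidableEq V]
    (G : SimpleGraph V) (V₁ : Finset V)
    (hcross : ∀ u v : V, u ∈ V₁ → v ∉ V₁ → G.Adj u v)
    (v w₁ w₂ : V) (hv : v ∈ V₁) (hw₁ : w₁ ∈ V₁) (hw₂ : w₂ ∈ V₁)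
    (h1 : G.Adj v w₁) (h2 : G.Adj v w₂) (hne : w₁ ≠ w₂) :
    V₁ᶜ.card * (V₁ᶜ.card - 1) ≤ bowtieCountThru2 G s(v, w₁) s(v, w₂) := by

  classical
  -- the map producing bowtie tuples
  set S := {t : V × V × V × V × V //
    IsBowtie G t.1 t.2.1 t.2.2.1 t.2.2.2.1 t.2.2.2.2 ∧
    s(v, w₁) ∈ btEdges t.1 t.2.1 t.2.2.1 t.2.2.2.1 t.2.2.2.2 ∧
    s(v, w₂) ∈ btEdges t.1 t.2.1 t.2.2.1 t.2.2.2.1 t.2.2.2.2} with hS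
  have hvV₂ : ∀ u : V, u ∈ V₁ᶜ → u ∉ V₁ := fun u hu => Finset.mem_compl.mp hu
  -- auxiliary tuple builder
  let tup : V × V × Bool × Bool × Bool → V × V × V × V × V := fun p =>
    let u₁ := p.1; let u₂ := p.2.1
    let P₁ : V × V := if p.2.2.1 then (u₁, w₁) else (w₁, u₁)
    let P₂ : V × V := if p.2.2.2.1 then (u₂, w₂) else (w₂, u₂)
    if p.2.2.2.2 then (v, P₂.1, P₂.2, P₁.1, P₁.2) else (v, P₁.1, P₁.2, P₂.1, P₂.2)
  have key : ∀ u₁ u₂ : V, u₁ ∈ V₁ᶜ → u₂ ∈ V₁ᶜ → u₁ ≠ u₂ → ∀ b : Bool × Bool × Bool,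
      IsBowtie G (tup (u₁,u₂,b)).1 (tup (u₁,u₂,b)).2.1 (tup (u₁,u₂,b)).2.2.1
        (tup (u₁,u₂,b)).2.2.2.1 (tup (u₁,u₂,b)).2.2.2.2 ∧
      s(v, w₁) ∈ btEdges (tup (u₁,u₂,b)).1 (tup (u₁,u₂,b)).2.1 (tup (u₁,u₂,b)).2.2.1
        (tup (u₁,u₂,b)).2.2.2.1 (tup (u₁,u₂,b)).2.2.2.2 ∧
      s(v, w₂) ∈ btEdges (tup (u₁,u₂,b)).1 (tup (u₁,u₂,b)).2.1 (tup (u₁,u₂,b)).2.2.1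
        (tup (u₁,u₂,b)).2.2.2.1 (tup (u₁,u₂,b)).2.2.2.2 := by
    intro u₁ u₂ hu₁ hu₂ huu b
    have hu₁' := hvV₂ u₁ hu₁
    have hu₂' := hvV₂ u₂ hu₂
    have a1 : G.Adj v u₁ := hcross v u₁ hv hu₁'
    have a2 : G.Adj v u₂ := hcross v u₂ hv hu₂'
    have a3 : G.Adj w₁ u₁ := hcross w₁ u₁ hw₁ hu₁'
    have a4 : G.Adj w₂ u₂ := hcross w₂ u₂ hw₂ hu₂'
    have d1 : w₁ ≠ u₂ := fun h => hu₂' (h ▸ hw₁)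
    have d2 : w₂ ≠ u₁ := fun h => hu₁' (h ▸ hw₂)
    have d3 : u₁ ≠ w₂ := fun h => hu₁' (h ▸ hw₂)
    have d4 : u₂ ≠ w₁ := fun h => hu₂' (h ▸ hw₁)
    obtain ⟨s, t, r⟩ := b
    rcases s <;> rcases t <;> rcases r <;>
      simp only [tup, if_true, if_false, Bool.false_eq_true, Bool.true_eq_false, ite_true,
        ite_false] <;>
      refine ⟨⟨?_, ?_, ?_, ?_, ?_, ?_, ?_, ?_, ?_, ?_⟩, ?_, ?_⟩ <;>
      first
        | exact h1 | exact h2 | exact a1 | exact a2 | exact a3 | exact a4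
        | exact a3.symm | exact a4.symm
        | exact hne | exact hne.symm | exact huu | exact huu.symm
        | exact d1 | exact d2 | exact d3 | exact d4
        | simp [btEdges]
  -- injectivity via a decoding function
  let ψ : V × V × V × V × V → V × V × Bool × Bool × Bool := fun t =>
    let a := t.2.1; let b := t.2.2.1; let d := t.2.2.2.1; let e := t.2.2.2.2
    if a = w₁ ∨ b = w₁ then
      ((if a = w₁ then b else a), (if d = w₂ then e else d),
        decide (a ≠ w₁), decide (d ≠ w₂), false)
    else
      ((if d = w₁ then e else d), (if a = w₂ then b else a),
        decide (d ≠ w₁), decide (a ≠ w₂), true)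
  have hdec : ∀ u₁ u₂ : V, u₁ ∈ V₁ᶜ → u₂ ∈ V₁ᶜ → ∀ b : Bool × Bool × Bool,
      ψ (tup (u₁, u₂, b)) = (u₁, u₂, b) := by
    intro u₁ u₂ hu₁ hu₂ b
    have hu₁' := hvV₂ u₁ hu₁
    have hu₂' := hvV₂ u₂ hu₂
    have d1 : w₁ ≠ u₂ := fun h => hu₂' (h ▸ hw₁)
    have d4 : u₂ ≠ w₁ := fun h => hu₂' (h ▸ hw₁)
    have d3 : u₁ ≠ w₂ := fun h => hu₁' (h ▸ hw₂)
    have d5 : u₁ ≠ w₁ := fun h => hu₁' (h ▸ hw₁)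
    have d6 : u₂ ≠ w₂ := fun h => hu₂' (h ▸ hw₂)
    obtain ⟨s, t, r⟩ := b
    rcases s <;> rcases t <;> rcases r <;>
      simp [tup, ψ, d1, d3, d4, d5, d6, hne, hne.symm]
  -- the injection into S
  let F : ↥(V₁ᶜ.offDiag) × (Bool × Bool × Bool) → S := fun p =>
    ⟨tup (p.1.1.1, p.1.1.2, p.2),
      key p.1.1.1 p.1.1.2 (Finset.mem_offDiag.mp p.1.2).1 (Finset.mem_offDiag.mp p.1.2).2.1
        (Finset.mem_offDiag.mp p.1.2).2.2 p.2⟩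
  have hFinj : Function.Injective F := by
    intro p q h
    have h' : tup (p.1.1.1, p.1.1.2, p.2) = tup (q.1.1.1, q.1.1.2, q.2) :=
      congrArg Subtype.val h
    have h2 : ψ (tup (p.1.1.1, p.1.1.2, p.2)) = ψ (tup (q.1.1.1, q.1.1.2, q.2)) :=
      congrArg ψ h'
    rw [hdec _ _ (Finset.mem_offDiag.mp p.1.2).1 (Finset.mem_offDiag.mp p.1.2).2.1,
        hdec _ _ (Finset.mem_offDiag.mp q.1.2).1 (Finset.mem_offDiag.mp q.1.2).2.1] at h2
    obtain ⟨⟨⟨pa, pb⟩, pm⟩, pbool⟩ := p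
    obtain ⟨⟨⟨qa, qb⟩, qm⟩, qbool⟩ := q
    simp only [Prod.mk.injEq] at h2
    obtain ⟨e1, e2, e3⟩ := h2
    subst e1; subst e2; subst e3
    rfl
  have hcard : V₁ᶜ.card * (V₁ᶜ.card - 1) * 8 ≤ Nat.card S := by
    have := Nat.card_le_card_of_injective F hFinj
    have hdom : Nat.card (↥(V₁ᶜ.offDiag) × (Bool × Bool × Bool))
        = V₁ᶜ.card * (V₁ᶜ.card - 1) * 8 := by
      have h8 : Fintype.card (Bool × Bool × Bool) = 8 := by simp
      rw [Nat.card_eq_fintype_card, Fintype.card_prod, Fintype.card_coe,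
        Finset.offDiag_card, h8]
      rw [mul_comm V₁ᶜ.card (V₁ᶜ.card - 1), Nat.sub_one_mul]
    omega
  rw [bowtieCountThru2, Nat.le_div_iff_mul_le (by norm_num : 0 < 8)]
  exact hcard
end

section
/- Let G be a graph on n vertices with vertex set partitioned into V₁ and V₂ such that all edges between V₁ and V₂ are present. If e₁ is an edge inside V₁ and e₂ is an edge inside V₂, then the number of bowtie subgraphs of G containing both e₁ and e₂ is at least 2(n−4). -/
open Finset

def btTup {V : Type*} [DecidableEq V] (V₁ : Finset V) (w₁ w₂ u₁ u₂ : V)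
    (s t p q : Bool) (x : V) : V × V × V × V × V :=
  let c := if x ∈ V₁ then (if s then u₁ else u₂) else (if s then w₁ else w₂)
  let o := if x ∈ V₁ then (if s then u₂ else u₁) else (if s then w₂ else w₁)
  let b₁ := if x ∈ V₁ then w₁ else u₁
  let b₂ := if x ∈ V₁ then w₂ else u₂
  let A := if p then (o, x) else (x, o)
  let B := if q then (b₁, b₂) else (b₂, b₁)
  if t then (c, A.1, A.2, B.1, B.2) else (c, B.1, B.2, A.1, A.2)

set_option maxHeartbeats 4000000 in
lemma btTup_inj {V : Type*} [DecidableEq V] (V₁ : Finset V) (w₁ w₂ u₁ u₂ : V)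
    (h12 : w₁ ≠ w₂) (h34 : u₁ ≠ u₂) (h13 : w₁ ≠ u₁) (h14 : w₁ ≠ u₂)
    (h23 : w₂ ≠ u₁) (h24 : w₂ ≠ u₂)
    (s t p q : Bool) (x : V) (hx1 : x ≠ w₁) (hx2 : x ≠ w₂) (hx3 : x ≠ u₁) (hx4 : x ≠ u₂)
    (s' t' p' q' : Bool) (x' : V) (hx1' : x' ≠ w₁) (hx2' : x' ≠ w₂) (hx3' : x' ≠ u₁)
    (hx4' : x' ≠ u₂)
    (h : btTup V₁ w₁ w₂ u₁ u₂ s t p q x = btTup V₁ w₁ w₂ u₁ u₂ s' t' p' q' x') :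
    s = s' ∧ t = t' ∧ p = p' ∧ q = q' ∧ x = x' := by
  by_cases hxV : x ∈ V₁ <;> by_cases hxV' : x' ∈ V₁ <;>
    simp only [btTup, hxV, hxV', if_true, if_false] at h <;>
    cases s <;> cases s' <;> cases t <;> cases t' <;> cases p <;> cases p' <;>
    cases q <;> cases q' <;>
    simp_all

set_option maxHeartbeats 4000000 in
lemma btTup_prop {V : Type*} [Fintype V] [DecidableEq V]
    (G : SimpleGraph V) (V₁ : Finset V)
    (hcross : ∀ u v : V, u ∈ V₁ → v ∉ V₁ → G.Adj u v)
    (w₁ w₂ u₁ u₂ : V)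
    (hw₁ : w₁ ∈ V₁) (hw₂ : w₂ ∈ V₁) (hu₁ : u₁ ∉ V₁) (hu₂ : u₂ ∉ V₁)
    (hw : G.Adj w₁ w₂) (hu : G.Adj u₁ u₂)
    (s t p q : Bool) (x : V) (hx1 : x ≠ w₁) (hx2 : x ≠ w₂) (hx3 : x ≠ u₁) (hx4 : x ≠ u₂) :
    (fun tt : V × V × V × V × V =>
      IsBowtie G tt.1 tt.2.1 tt.2.2.1 tt.2.2.2.1 tt.2.2.2.2 ∧
      s(w₁,w₂) ∈ btEdges tt.1 tt.2.1 tt.2.2.1 tt.2.2.2.1 tt.2.2.2.2 ∧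
      s(u₁,u₂) ∈ btEdges tt.1 tt.2.1 tt.2.2.1 tt.2.2.2.1 tt.2.2.2.2)
      (btTup V₁ w₁ w₂ u₁ u₂ s t p q x) := by
  have h13 : w₁ ≠ u₁ := fun h => hu₁ (h ▸ hw₁)
  have h14 : w₁ ≠ u₂ := fun h => hu₂ (h ▸ hw₁)
  have h23 : w₂ ≠ u₁ := fun h => hu₁ (h ▸ hw₂)
  have h24 : w₂ ≠ u₂ := fun h => hu₂ (h ▸ hw₂)
  have a11 : G.Adj w₁ u₁ := hcross _ _ hw₁ hu₁
  have a12 : G.Adj w₁ u₂ := hcross _ _ hw₁ hu₂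
  have a21 : G.Adj w₂ u₁ := hcross _ _ hw₂ hu₁
  have a22 : G.Adj w₂ u₂ := hcross _ _ hw₂ hu₂
  have a11' := a11.symm; have a12' := a12.symm
  have a21' := a21.symm; have a22' := a22.symm
  have hw' := hw.symm; have hu' := hu.symm
  have h13' := h13.symm; have h14' := h14.symm
  have h23' := h23.symm; have h24' := h24.symm
  have hx1' := hx1.symm; have hx2' := hx2.symm
  have hx3' := hx3.symm; have hx4' := hx4.symm
  have h12 := hw.ne; have h12' := hw.ne'
  have h34 := hu.ne; have h34' := hu.ne'
  by_cases hxV : x ∈ V₁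
  · have b1 : G.Adj u₁ x := (hcross _ _ hxV hu₁).symm
    have b2 : G.Adj u₂ x := (hcross _ _ hxV hu₂).symm
    have b1' := b1.symm; have b2' := b2.symm
    cases s <;> cases t <;> cases p <;> cases q <;>
      simp_all [btTup, IsBowtie, btEdges, Sym2.eq_iff]
  · have b1 : G.Adj w₁ x := hcross _ _ hw₁ hxV
    have b2 : G.Adj w₂ x := hcross _ _ hw₂ hxV
    have b1' := b1.symm; have b2' := b2.symm
    cases s <;> cases t <;> cases p <;> cases q <;>
      simp_all [btTup, IsBowtie, btEdges, Sym2.eq_iff]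

theorem bowties_through_opposite_pair {V : Type*} [Fintype V] [DecidableEq V]
    (G : SimpleGraph V) (V₁ : Finset V)
    (hcross : ∀ u v : V, u ∈ V₁ → v ∉ V₁ → G.Adj u v)
    (w₁ w₂ u₁ u₂ : V)
    (hw₁ : w₁ ∈ V₁) (hw₂ : w₂ ∈ V₁) (hu₁ : u₁ ∉ V₁) (hu₂ : u₂ ∉ V₁)
    (hw : G.Adj w₁ w₂) (hu : G.Adj u₁ u₂) :
    2 * (Fintype.card V - 4) ≤ bowtieCountThru2 G s(w₁, w₂) s(u₁, u₂) := by
  classical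
  have h12 : w₁ ≠ w₂ := hw.ne
  have h34 : u₁ ≠ u₂ := hu.ne
  have h13 : w₁ ≠ u₁ := fun h => hu₁ (h ▸ hw₁)
  have h14 : w₁ ≠ u₂ := fun h => hu₂ (h ▸ hw₁)
  have h23 : w₂ ≠ u₁ := fun h => hu₁ (h ▸ hw₂)
  have h24 : w₂ ≠ u₂ := fun h => hu₂ (h ▸ hw₂)
  rw [bowtieCountThru2, Nat.le_div_iff_mul_le (by norm_num : 0 < 8)]
  have hX4 : Fintype.card {x : V // x ≠ w₁ ∧ x ≠ w₂ ∧ x ≠ u₁ ∧ x ≠ u₂} = Fintype.card V - 4 := by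
    rw [Fintype.card_subtype]
    have he : (univ.filter fun x : V => x ≠ w₁ ∧ x ≠ w₂ ∧ x ≠ u₁ ∧ x ≠ u₂)
        = univ \ {w₁, w₂, u₁, u₂} := by
      ext y; simp [not_or, and_assoc]
    have hc : ({w₁, w₂, u₁, u₂} : Finset V).card = 4 := by
      rw [card_insert_of_notMem (by simp [h12, h13, h14]),
        card_insert_of_notMem (by simp [h23, h24]),
        card_insert_of_notMem (by simp [h34]), card_singleton]
    rw [he, card_sdiff_of_subset (subset_univ _), card_univ, hc]
  have hX : Nat.card (Bool × Bool × Bool × Bool × {x : V // x ≠ w₁ ∧ x ≠ w₂ ∧ x ≠ u₁ ∧ x ≠ u₂}) = 16 * (Fintype.card V - 4) := by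
    simp only [Nat.card_eq_fintype_card, Fintype.card_prod, Fintype.card_bool, hX4]
    ring
  have main : 16 * (Fintype.card V - 4) ≤ Nat.card {t : V × V × V × V × V //
      IsBowtie G t.1 t.2.1 t.2.2.1 t.2.2.2.1 t.2.2.2.2 ∧
      s(w₁,w₂) ∈ btEdges t.1 t.2.1 t.2.2.1 t.2.2.2.1 t.2.2.2.2 ∧
      s(u₁,u₂) ∈ btEdges t.1 t.2.1 t.2.2.1 t.2.2.2.1 t.2.2.2.2} := by
    rw [← hX]
    apply Nat.card_le_card_of_injective
      (f := fun a : Bool × Bool × Bool × Bool × {x : V // x ≠ w₁ ∧ x ≠ w₂ ∧ x ≠ u₁ ∧ x ≠ u₂} =>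
        (⟨btTup V₁ w₁ w₂ u₁ u₂ a.1 a.2.1 a.2.2.1 a.2.2.2.1 a.2.2.2.2.1,
          btTup_prop G V₁ hcross w₁ w₂ u₁ u₂ hw₁ hw₂ hu₁ hu₂ hw hu
            a.1 a.2.1 a.2.2.1 a.2.2.2.1 a.2.2.2.2.1
            a.2.2.2.2.2.1 a.2.2.2.2.2.2.1 a.2.2.2.2.2.2.2.1 a.2.2.2.2.2.2.2.2⟩ :
          {t : V × V × V × V × V //
            IsBowtie G t.1 t.2.1 t.2.2.1 t.2.2.2.1 t.2.2.2.2 ∧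
            s(w₁,w₂) ∈ btEdges t.1 t.2.1 t.2.2.1 t.2.2.2.1 t.2.2.2.2 ∧
            s(u₁,u₂) ∈ btEdges t.1 t.2.1 t.2.2.1 t.2.2.2.1 t.2.2.2.2}))
    rintro ⟨s, t, p, q, x, hx1, hx2, hx3, hx4⟩ ⟨s', t', p', q', x', hx1', hx2', hx3', hx4'⟩ hab
    simp only [Subtype.mk.injEq] at hab
    obtain ⟨e1, e2, e3, e4, e5⟩ := btTup_inj V₁ w₁ w₂ u₁ u₂ h12 h34 h13 h14 h23 h24
      s t p q x hx1 hx2 hx3 hx4 s' t' p' q' x' hx1' hx2' hx3' hx4' hab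
    subst e1; subst e2; subst e3; subst e4; subst e5
    rfl
  omega
end

section
/- Let H be a graph on n vertices (n large) with vertex set partitioned into V₁, V₂ of sizes within 2εn of n/2 for small ε > 0, with all cross edges present, and let B be the set of edges inside the parts with |B| = b ≤ ε²n². If some vertex v has at least 5ε^{2/3}n neighbours inside its own part via edges of B, then some edge of H is contained in more than 13bn bowties. -/
open Finset

lemma bowtie_numeric (ε x nn D O b : ℝ) (hε : 0 < ε) (hε' : ε ≤ 1/1000)
    (hx0 : 0 < x) (hε2 : ε ^ 2 ≤ x * ε) (hxn : 1 ≤ x * nn) (hn100 : 100 ≤ nn)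
    (hD : 5 * x * nn ≤ D) (hO : nn / 2 - 2 * ε * nn ≤ O)
    (hb : b ≤ ε ^ 2 * nn ^ 2) :
    104 * b * nn + 8 ≤ (D - 1) * (O * O - O) := by
  have hn0 : (0 : ℝ) < nn := by linarith
  have hOn : (0.498 : ℝ) * nn ≤ O := by nlinarith
  have hD2 : 4 * x * nn ≤ D - 1 := by nlinarith
  have hOm : (0.488 : ℝ) * nn ≤ O - 1 := by nlinarith
  have hxn3 : (10000 : ℝ) ≤ x * nn ^ 3 := by nlinarith [sq_nonneg (nn - 100)]
  have hprod : (0.9 : ℝ) * x * nn ^ 3 ≤ (D - 1) * (O * O - O) := by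
    have h : (D - 1) * (O * O - O) = (D - 1) * (O * (O - 1)) := by ring
    rw [h]
    calc (0.9 : ℝ) * x * nn ^ 3 ≤ (4 * x * nn) * ((0.498 * nn) * (0.488 * nn)) := by
          nlinarith [hx0.le, pow_nonneg hn0.le 3]
    _ ≤ (D - 1) * (O * (O - 1)) := by gcongr <;> nlinarith
  have h1 : 104 * b * nn ≤ 104 * (ε ^ 2 * nn ^ 2) * nn := by nlinarith
  have h2 : 104 * (ε ^ 2 * nn ^ 2) * nn ≤ 104 * (x * ε) * nn ^ 3 := by
    nlinarith [pow_nonneg hn0.le 3]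
  have h3 : 104 * (x * ε) * nn ^ 3 ≤ 0.104 * x * nn ^ 3 := by
    have hx3 : (0 : ℝ) ≤ x * nn ^ 3 := by positivity
    nlinarith
  linarith

lemma bowtie_rpow_split (ε : ℝ) (hε : 0 < ε) (hε' : ε ≤ 1/1000) :
    ε ^ 2 ≤ ε ^ ((2 : ℝ) / 3) * ε := by
  have h43 : ε ^ ((4 : ℝ) / 3) ≤ ε := by
    calc ε ^ ((4 : ℝ) / 3) ≤ ε ^ ((1 : ℝ)) :=
          Real.rpow_le_rpow_of_exponent_ge hε (by linarith) (by norm_num)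
    _ = ε := Real.rpow_one ε
  have hsplit : ε ^ 2 = ε ^ ((2 : ℝ) / 3) * ε ^ ((4 : ℝ) / 3) := by
    rw [← Real.rpow_natCast ε 2, ← Real.rpow_add hε]
    norm_num
  rw [hsplit]
  have := Real.rpow_pos_of_pos hε ((2 : ℝ) / 3)
  gcongr

set_option maxHeartbeats 1000000 in
theorem edge_in_many_bowties_of_large_bad_degree :
    ∃ ε₀ : ℝ, 0 < ε₀ ∧ ∀ ε : ℝ, 0 < ε → ε ≤ ε₀ →
      ∃ N : ℕ, ∀ n : ℕ, N ≤ n → ∀ G : SimpleGraph (Fin n), ∀ V₁ : Finset (Fin n),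
        |(V₁.card : ℝ) - n / 2| ≤ 2 * ε * n →
        |(V₁ᶜ.card : ℝ) - n / 2| ≤ 2 * ε * n →
        (∀ u v : Fin n, u ∈ V₁ → v ∉ V₁ → G.Adj u v) →
        ((insideEdges G V₁ + insideEdges G V₁ᶜ : ℕ) : ℝ) ≤ ε ^ 2 * n ^ 2 →
        (∃ v : Fin n, 5 * ε ^ ((2 : ℝ) / 3) * n ≤ (sameDeg G V₁ v : ℝ)) →
        ∃ f ∈ G.edgeSet,
          13 * ((insideEdges G V₁ + insideEdges G V₁ᶜ : ℕ) : ℝ) * n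
            < (bowtieCountThru1 G f : ℝ) := by
  classical
  refine ⟨1/1000, by norm_num, ?_⟩
  intro ε hε hε'
  refine ⟨max 100 ⌈(ε ^ ((2 : ℝ) / 3))⁻¹⌉₊, ?_⟩
  rintro n hn G V₁ hV₁ hV₂ hcross hb ⟨v, hv⟩
  have hx0 : (0 : ℝ) < ε ^ ((2 : ℝ) / 3) := Real.rpow_pos_of_pos hε _
  have hn100 : (100 : ℝ) ≤ n := by
    have h : (100 : ℕ) ≤ n := le_trans (le_max_left _ _) hn
    exact_mod_cast h
  have hxn : 1 ≤ ε ^ ((2 : ℝ) / 3) * n := by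
    have h1 : (⌈(ε ^ ((2 : ℝ) / 3))⁻¹⌉₊ : ℝ) ≤ n := by
      exact_mod_cast le_trans (le_max_right _ _) hn
    have h2 : (ε ^ ((2 : ℝ) / 3))⁻¹ ≤ n := le_trans (Nat.le_ceil _) h1
    calc (1 : ℝ) = ε ^ ((2 : ℝ) / 3) * (ε ^ ((2 : ℝ) / 3))⁻¹ := by field_simp
    _ ≤ ε ^ ((2 : ℝ) / 3) * n := by gcongr
  -- the set of same-part neighbours of v
  have hWcard : sameDeg G V₁ v
      = (univ.filter (fun w => G.Adj v w ∧ (w ∈ V₁ ↔ v ∈ V₁))).card := by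
    rw [sameDeg, Nat.card_eq_fintype_card, Fintype.card_subtype]
  set Wset : Finset (Fin n) := univ.filter (fun w => G.Adj v w ∧ (w ∈ V₁ ↔ v ∈ V₁))
    with hWdef
  have hD : 5 * ε ^ ((2 : ℝ) / 3) * n ≤ (Wset.card : ℝ) := by rw [← hWcard]; exact hv
  -- the opposite part
  set opp : Finset (Fin n) := if v ∈ V₁ then V₁ᶜ else V₁ with hoppdef
  have hoppiff : ∀ y ∈ opp, ¬(y ∈ V₁ ↔ v ∈ V₁) := by
    intro y hy
    by_cases hvV : v ∈ V₁ <;> simp [hoppdef, hvV] at hy <;> simp [hvV, hy]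
  have hO : (n : ℝ) / 2 - 2 * ε * n ≤ (opp.card : ℝ) := by
    by_cases hvV : v ∈ V₁
    · simp only [hoppdef, if_pos hvV]; linarith [(abs_le.mp hV₂).1]
    · simp only [hoppdef, if_neg hvV]; linarith [(abs_le.mp hV₁).1]
  have hadj : ∀ a b : Fin n, (a ∈ V₁ ↔ v ∈ V₁) → b ∈ opp → G.Adj a b := by
    intro a b ha hbo
    have hb' := hoppiff b hbo
    by_cases hvV : v ∈ V₁
    · exact hcross a b (ha.mpr hvV) (fun h => hb' (iff_of_true h hvV))
    · have hbV : b ∈ V₁ := by by_contra h; exact hb' (iff_of_false h hvV)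
      exact (hcross b a hbV (fun h => hvV (ha.mp h))).symm
  -- pick a same-part neighbour w
  have hWpos : 0 < Wset.card := by
    have h : (0 : ℝ) < (Wset.card : ℝ) := lt_of_lt_of_le (by positivity) hD
    exact_mod_cast h
  obtain ⟨w, hw⟩ := Finset.card_pos.mp hWpos
  obtain ⟨hwadj, hwiff⟩ := (Finset.mem_filter.mp hw).2
  refine ⟨s(v, w), G.mem_edgeSet.mpr hwadj, ?_⟩
  -- the injection giving many bowties through s(v,w)
  have hinj : ((Wset.erase w) ×ˢ opp.offDiag).card
      ≤ Nat.card {t : Fin n × Fin n × Fin n × Fin n × Fin n //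
          IsBowtie G t.1 t.2.1 t.2.2.1 t.2.2.2.1 t.2.2.2.2 ∧
          s(v, w) ∈ btEdges t.1 t.2.1 t.2.2.1 t.2.2.2.1 t.2.2.2.2} := by
    rw [← Nat.card_eq_finsetCard ((Wset.erase w) ×ˢ opp.offDiag)]
    refine Nat.card_le_card_of_injective
      (fun p => ⟨(v, w, p.1.2.1, p.1.1, p.1.2.2), ?_⟩) ?_
    · obtain ⟨p, hp⟩ := p
      obtain ⟨hp1, hp2⟩ := Finset.mem_product.mp hp
      obtain ⟨hne, hp1'⟩ := Finset.mem_erase.mp hp1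
      obtain ⟨hw'adj, hw'iff⟩ := (Finset.mem_filter.mp hp1').2
      obtain ⟨hy, hy', hyne⟩ := Finset.mem_offDiag.mp hp2
      refine ⟨⟨hwadj, hadj v p.2.1 Iff.rfl hy, hadj w p.2.1 hwiff hy,
        hw'adj, hadj v p.2.2 Iff.rfl hy', hadj p.1 p.2.2 hw'iff hy',
        fun h => hne h.symm, ?_, ?_, hyne⟩, by simp [btEdges]⟩
      · intro h; exact hoppiff p.2.2 hy' (h ▸ hwiff)
      · intro h; exact hoppiff p.2.1 hy (h.symm ▸ hw'iff)
    · intro p1 p2 h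
      simp only [Subtype.mk.injEq, Prod.mk.injEq] at h
      obtain ⟨⟨a1, b1, c1⟩, _⟩ := p1
      obtain ⟨⟨a2, b2, c2⟩, _⟩ := p2
      simp only [Subtype.mk.injEq, Prod.mk.injEq]
      exact ⟨h.2.2.2.1, h.2.2.1, h.2.2.2.2⟩
  -- count T
  have hTcard : ((Wset.erase w) ×ˢ opp.offDiag).card
      = (Wset.card - 1) * (opp.card * opp.card - opp.card) := by
    rw [Finset.card_product, Finset.card_erase_of_mem hw, Finset.offDiag_card]
  have hD1 : (1 : ℕ) ≤ Wset.card := hWpos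
  have hO1 : (1 : ℕ) ≤ opp.card := by
    have h : (1 : ℝ) ≤ (opp.card : ℝ) := by nlinarith
    exact_mod_cast h
  have hbnn : (0 : ℝ) ≤ ((insideEdges G V₁ + insideEdges G V₁ᶜ : ℕ) : ℝ) :=
    Nat.cast_nonneg _
  have key : 104 * (insideEdges G V₁ + insideEdges G V₁ᶜ) * n + 8
      ≤ ((Wset.erase w) ×ˢ opp.offDiag).card := by
    have hcast : ((104 * (insideEdges G V₁ + insideEdges G V₁ᶜ) * n + 8 : ℕ) : ℝ)
        ≤ ((((Wset.erase w) ×ˢ opp.offDiag).card : ℕ) : ℝ) := by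
      rw [hTcard]
      push_cast [Nat.cast_sub hD1, Nat.cast_sub (Nat.le_mul_of_pos_left _ hO1)]
      have H := bowtie_numeric ε (ε ^ ((2 : ℝ) / 3)) n (Wset.card : ℝ) (opp.card : ℝ)
        ((insideEdges G V₁ + insideEdges G V₁ᶜ : ℕ) : ℝ) hε hε' hx0
        (bowtie_rpow_split ε hε hε') hxn hn100 hD hO hb
      push_cast at H
      linarith
    exact_mod_cast hcast
  have hcount : 13 * (insideEdges G V₁ + insideEdges G V₁ᶜ) * n + 1
      ≤ bowtieCountThru1 G s(v, w) := by
    rw [bowtieCountThru1]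
    refine (Nat.le_div_iff_mul_le (by norm_num)).mpr ?_
    calc (13 * (insideEdges G V₁ + insideEdges G V₁ᶜ) * n + 1) * 8
        = 104 * (insideEdges G V₁ + insideEdges G V₁ᶜ) * n + 8 := by ring
    _ ≤ ((Wset.erase w) ×ˢ opp.offDiag).card := key
    _ ≤ _ := hinj
  have hfin : ((13 * (insideEdges G V₁ + insideEdges G V₁ᶜ) * n + 1 : ℕ) : ℝ)
      ≤ (bowtieCountThru1 G s(v, w) : ℝ) := by exact_mod_cast hcount
  push_cast at hfin ⊢
  linarith
end
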